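/- arXiv:2102.03648 — 6 statements merged into one kernel-verified Lean document; each statement's English description precedes it below -/
import Mathlib

section
/- Let M be a metrizable topological space. For any open set W⊆M×[0,1] containing the set M×{0}, there exists a continuous function λ:M→(0,1] such that {(x,t)∈M×[0,1] : 0≤t≤λ(x)} ⊆ W. -/
open Set Topology unitInterval

/-- For any open set `W ⊆ M × [0,1]` containing `M × {0}` there is a continuous function
`λ : M → (0,1]` such that `{(x,t) : 0 ≤ t ≤ λ(x)} ⊆ W`. -/
theorem statement3 {M : Type*} [TopologicalSpace M] [TopologicalSpace.MetrizableSpace M]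
    (W : Set (M × I)) (hW : IsOpen W) (hW0 : ∀ x : M, (x, (0 : I)) ∈ W) :
    ∃ l : M → ℝ, Continuous l ∧ (∀ x, l x ∈ Set.Ioc (0 : ℝ) 1) ∧
      ∀ (x : M) (t : I), (t : ℝ) ≤ l x → (x, t) ∈ W := by
  letI : MetricSpace M := TopologicalSpace.metrizableSpaceMetric M
  by_cases hne : Wᶜ = ∅
  · refine ⟨fun _ => 1, continuous_const, fun x => ⟨one_pos, le_refl 1⟩, fun x t _ => ?_⟩
    have : W = univ := by
      rw [← compl_empty_iff, hne]
    simp [this]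
  · have hne' : Wᶜ.Nonempty := nonempty_iff_ne_empty.mpr hne
    have hcl : IsClosed Wᶜ := hW.isClosed_compl
    set f : M → ℝ := fun x => Metric.infDist ((x, (0 : I)) : M × I) Wᶜ with hf
    have hfc : Continuous f := by
      exact (Metric.continuous_infDist_pt Wᶜ).comp (continuous_id.prodMk continuous_const)
    have hfpos : ∀ x, 0 < f x := fun x =>
      (hcl.notMem_iff_infDist_pos hne').mp (fun h => h (hW0 x))
    refine ⟨fun x => min 1 (f x / 2), ?_, fun x => ⟨?_, min_le_left _ _⟩, ?_⟩
    · exact continuous_const.min (hfc.div_const 2)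
    · exact lt_min one_pos (half_pos (hfpos x))
    · intro x t ht
      by_contra hmem
      have hmem' : ((x, t) : M × I) ∈ Wᶜ := hmem
      have h1 : f x ≤ dist ((x, (0 : I)) : M × I) (x, t) :=
        Metric.infDist_le_dist_of_mem hmem'
      have hd : dist ((x, (0 : I)) : M × I) (x, t) = (t : ℝ) := by
        rw [Prod.dist_eq]
        simp [Subtype.dist_eq, Real.dist_eq, abs_of_nonneg t.2.1, t.2.1]
      rw [hd] at h1
      have h2 : (t : ℝ) ≤ f x / 2 := le_trans ht (min_le_right _ _)
      have : f x ≤ f x / 2 := le_trans h1 h2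
      linarith [hfpos x]
end

section
/- Let (M,d) be a metric space and X a homotopy dense subset of M. Then there exists a continuous map H:M×[0,1]→M such that for every x∈M and t∈(0,1]: H(x,0)=x, H(x,t)∈X, and d(x,H(x,t))<t. -/
open Set Topology unitInterval

/-- A subset `X` of a topological space `M` is homotopy dense if there is a homotopy
`H : M × [0,1] → M` with `H(x,0) = x` and `H(x,t) ∈ X` for `t ∈ (0,1]`. -/
def HomotopyDense {M : Type*} [TopologicalSpace M] (X : Set M) : Prop :=
  ∃ H : M × I → M, Continuous H ∧ (∀ x, H (x, 0) = x) ∧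
    ∀ x t, t ≠ 0 → H (x, t) ∈ X

/-- If `X` is homotopy dense in a metric space `(M, d)`, there is a homotopy
`H : M × [0,1] → M` with `H(x,0) = x`, `H(x,t) ∈ X` and `d(x, H(x,t)) < t` for
all `x ∈ M` and `t ∈ (0,1]`. -/
theorem statement4 {M : Type*} [MetricSpace M] (X : Set M) (hX : HomotopyDense X) :
    ∃ H : M × I → M, Continuous H ∧ (∀ x, H (x, 0) = x) ∧
      ∀ (x : M) (t : I), t ≠ 0 → H (x, t) ∈ X ∧ dist x (H (x, t)) < (t : ℝ) := by
  classical
  obtain ⟨H₀, hH₀c, hH₀0, hH₀mem⟩ := hX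
  -- the auxiliary family: f (x,t) s = dist x (H₀ (x, min s t))
  set f : (M × I) → I → ℝ := fun p s => dist p.1 (H₀ (p.1, min s p.2)) with hfdef
  have hfc : Continuous ↿f := by
    apply Continuous.dist (continuous_fst.comp continuous_fst)
    exact hH₀c.comp
      (((continuous_fst.comp continuous_fst)).prodMk
        (continuous_snd.min ((continuous_snd.comp continuous_fst))))
  -- the running sup
  set w : M × I → ℝ := fun p => sSup (f p '' univ) with hwdef
  have hwc : Continuous w := isCompact_univ.continuous_sSup hfc
  have hfpc : ∀ p : M × I, Continuous (f p) := fun p =>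
    hfc.comp (Continuous.prodMk_right p)
  have hbdd : ∀ p : M × I, BddAbove (f p '' univ) := fun p =>
    (isCompact_univ.image (hfpc p)).bddAbove
  have hne : ∀ p : M × I, (f p '' univ).Nonempty := fun p =>
    (univ_nonempty).image _
  -- w dominates the distance
  have w_ge : ∀ p : M × I, dist p.1 (H₀ p) ≤ w p := by
    intro p
    refine le_csSup (hbdd p) ⟨p.2, mem_univ _, ?_⟩
    simp [hfdef, min_self]
  -- w (x, 0) = 0
  have w_zero : ∀ x : M, w (x, 0) = 0 := by
    intro x
    have himg : f (x, 0) '' univ = {0} := by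
      have : f (x, 0) = fun _ => (0 : ℝ) := by
        funext s
        have h1 : min s (0 : I) = 0 := min_eq_right s.2.1
        simp only [hfdef, h1, hH₀0, dist_self]
      rw [this]
      exact univ_nonempty.image_const 0
    rw [hwdef]; simp only [himg, csSup_singleton]
  -- monotonicity of w in the second variable
  have w_mono : ∀ x : M, Monotone fun s : I => w (x, s) := by
    intro x s t hst
    refine csSup_le_csSup (hbdd (x, t)) (hne (x, s)) ?_
    intro a ha
    obtain ⟨c, -, rfl⟩ := ha
    refine ⟨min c s, mem_univ _, ?_⟩
    simp only [hfdef]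
    rw [min_eq_left ((min_le_right c s).trans hst)]
  -- the function whose root we take
  set G : M → ℝ → ℝ := fun x r => r + w (x, projIcc 0 1 zero_le_one r) with hGdef
  have hGmono : ∀ x, StrictMono (G x) := by
    intro x a b hab
    have := w_mono x (monotone_projIcc zero_le_one hab.le)
    simp only [hGdef]
    linarith
  have hG0 : ∀ x, G x 0 = 0 := by
    intro x
    simp only [hGdef, projIcc_left]
    have : (⟨(0:ℝ), left_mem_Icc.2 zero_le_one⟩ : I) = 0 := rfl
    rw [this, w_zero]; ring
  have hGc : Continuous (fun q : (M × I) × ℝ => G q.1.1 q.2) := by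
    simp only [hGdef]
    exact continuous_snd.add
      (hwc.comp ((continuous_fst.comp continuous_fst).prodMk
        (continuous_projIcc.comp continuous_snd)))
  have w_nonneg : ∀ p : M × I, 0 ≤ w p := fun p => dist_nonneg.trans (w_ge p)
  -- existence of the root
  have hroot : ∀ p : M × I, ∃ r ∈ Icc (0:ℝ) 1, G p.1 r = (p.2 : ℝ) := by
    intro p
    have hconG : ContinuousOn (G p.1) (Icc (0:ℝ) 1) :=
      (hGc.comp (Continuous.prodMk_right p)).continuousOn
    have hmem : (p.2 : ℝ) ∈ Icc (G p.1 0) (G p.1 1) := by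
      constructor
      · rw [hG0]; exact p.2.2.1
      · have h1 : (1:ℝ) ≤ G p.1 1 := by
          simp only [hGdef]
          have := w_nonneg (p.1, projIcc 0 1 zero_le_one 1)
          linarith
        exact p.2.2.2.trans h1
    obtain ⟨r, hr, hGr⟩ := intermediate_value_Icc zero_le_one hconG hmem
    exact ⟨r, hr, hGr⟩
  choose sel hselmem hseleq using hroot
  -- continuity of the root selection
  have hselc : Continuous sel := by
    rw [continuous_iff_continuousAt]
    intro p₀
    rw [ContinuousAt, tendsto_order]
    constructor
    · intro a ha
      rcases lt_or_ge a 0 with h0 | h0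
      · exact Filter.Eventually.of_forall fun p => h0.trans_le (hselmem p).1
      · -- G p₀.1 a < t₀, so eventually G p.1 a < t, so eventually a < sel p
        have hlt : G p₀.1 a < (p₀.2 : ℝ) := by
          rw [← hseleq p₀]; exact hGmono p₀.1 ha
        have hcont : Continuous fun p : M × I => G p.1 a - (p.2 : ℝ) :=
          (hGc.comp (continuous_id.prodMk continuous_const)).sub
            (continuous_subtype_val.comp continuous_snd)
        have hev : ∀ᶠ p in 𝓝 p₀, G p.1 a - (p.2 : ℝ) < 0 :=
          (hcont.tendsto p₀).eventually_lt_const (by linarith)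
        filter_upwards [hev] with p hp
        by_contra hcon
        push_neg at hcon
        have := (hGmono p.1).monotone hcon
        rw [hseleq p] at this
        linarith
    · intro b hb
      rcases lt_or_ge 1 b with h1 | h1
      · exact Filter.Eventually.of_forall fun p => ((hselmem p).2).trans_lt h1
      · have hlt : (p₀.2 : ℝ) < G p₀.1 b := by
          rw [← hseleq p₀]; exact hGmono p₀.1 hb
        have hcont : Continuous fun p : M × I => G p.1 b - (p.2 : ℝ) :=
          (hGc.comp (continuous_id.prodMk continuous_const)).sub
            (continuous_subtype_val.comp continuous_snd)
        have hev : ∀ᶠ p in 𝓝 p₀, 0 < G p.1 b - (p.2 : ℝ) :=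
          (hcont.tendsto p₀).eventually_const_lt (by linarith)
        filter_upwards [hev] with p hp
        by_contra hcon
        push_neg at hcon
        have := (hGmono p.1).monotone hcon
        rw [hseleq p] at this
        linarith
  -- the reparametrised homotopy
  set sg : M × I → I := fun p => projIcc 0 1 zero_le_one (sel p) with hsgdef
  have hsgeq : ∀ p, sg p = ⟨sel p, hselmem p⟩ := fun p => projIcc_of_mem _ (hselmem p)
  refine ⟨fun p => H₀ (p.1, sg p), ?_, ?_, ?_⟩
  · exact hH₀c.comp (continuous_fst.prodMk (continuous_projIcc.comp hselc))
  · intro x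
    have h0 : sel (x, 0) = 0 := by
      apply (hGmono x).injective
      rw [hseleq (x, 0), hG0]
      rfl
    have : sg (x, 0) = 0 := by
      rw [hsgeq]; exact Subtype.ext h0
    simp only [this, hH₀0]
  · intro x t ht
    have htR : (t : ℝ) ≠ 0 := fun h => ht (Subtype.ext h)
    have hselpos : 0 < sel (x, t) := by
      rcases (hselmem (x, t)).1.lt_or_eq with h | h
      · exact h
      · exfalso
        apply htR
        rw [← hseleq (x, t), ← h, hG0]
    have hsgne : sg (x, t) ≠ 0 := by
      rw [hsgeq]
      intro h
      have := congrArg (Subtype.val) h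
      simp only at this
      exact hselpos.ne' this
    refine ⟨hH₀mem x _ hsgne, ?_⟩
    have hdle : dist x (H₀ (x, sg (x, t))) ≤ w (x, sg (x, t)) := w_ge (x, sg (x, t))
    have hweq : sel (x, t) + w (x, sg (x, t)) = (t : ℝ) := by
      have := hseleq (x, t)
      simp only [hGdef, hsgdef] at this ⊢
      exact this
    linarith
end

section
/- Let M be a separable metrizable absolute neighborhood retract and X a homotopy dense subset of M. Then there exist an open neighborhood W of the diagonal in M×M and a continuous map λ:W×[0,1]→M such that for every (x,y)∈W: (1) λ(x,y,0)=x and λ(x,y,1)=y; (2) λ(x,x,t)=x for every t∈[0,1]; (3) if x≠y, then λ(x,y,t)∈X for every t∈(0,1). -/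
open Set Topology unitInterval

/-- An open cover of a topological space. -/
def IsOpenCover {M : Type*} [TopologicalSpace M] (𝒰 : Set (Set M)) : Prop :=
  (∀ U ∈ 𝒰, IsOpen U) ∧ ⋃₀ 𝒰 = Set.univ

/-- Two maps `f, g : K → M` are `𝒰`-near if every point is sent by both maps into
a common member of `𝒰`. -/
def UNear {K M : Type*} (𝒰 : Set (Set M)) (f g : K → M) : Prop :=
  ∀ x, ∃ U ∈ 𝒰, f x ∈ U ∧ g x ∈ U

/-- A space `M` is an absolute neighborhood retract if whenever `M` is embedded as a closed
subspace of a metrizable space `Y`, it is a retract of an open neighborhood. -/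
def IsANR (M : Type u) [TopologicalSpace M] : Prop :=
  ∀ (Y : Type u) [TopologicalSpace Y] [TopologicalSpace.MetrizableSpace Y]
    (f : M → Y), IsClosedEmbedding f →
      ∃ (U : Set Y) (r : Y → M), IsOpen U ∧ Set.range f ⊆ U ∧
        ContinuousOn r U ∧ ∀ x, r (f x) = x


section AuxKW

open KuratowskiEmbedding ENNReal

theorem lp_coeFn_sum {ι : Type*} (s : Finset ι) (f : ι → lp (fun _ : ℕ => ℝ) ∞) :
    ((∑ i ∈ s, f i : lp (fun _ : ℕ => ℝ) ∞) : ℕ → ℝ) = ∑ i ∈ s, ((f i : ℕ → ℝ)) := by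
  classical
  induction s using Finset.cons_induction with
  | empty => simp; rfl
  | cons a s ha ih => rw [Finset.sum_cons, Finset.sum_cons, lp.coeFn_add, ih]

theorem aux_closed {α : Type} [MetricSpace α] (b : ℕ → α) (hb : DenseRange b)
    (c : lp (fun _ : ℕ => ℝ) ∞)
    (hc : c ∈ convexHull ℝ (Set.range (embeddingOfSubset b)))
    (hcl : c ∈ closure (Set.range (embeddingOfSubset b))) :
    c ∈ Set.range (embeddingOfSubset b) := by
  classical
  set e : α → lp (fun _ : ℕ => ℝ) ∞ := embeddingOfSubset b with he_def
  have he : Isometry e := embeddingOfSubset_isometry b hb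
  rw [convexHull_eq] at hc
  obtain ⟨ι, t, w, z, hw0, hw1, hz, hcm⟩ := hc
  have hz2 : ∀ i, ∃ a, i ∈ t → e a = z i := by
    intro i
    by_cases h : i ∈ t
    · obtain ⟨a, ha⟩ := hz i h
      exact ⟨a, fun _ => ha⟩
    · obtain ⟨y, hy, -⟩ := Metric.mem_closure_iff.1 hcl 1 one_pos
      obtain ⟨a, -⟩ := hy
      exact ⟨a, fun h' => absurd h' h⟩
  choose z' hz' using hz2
  have hcsum : (∑ i ∈ t, w i • z i) = c := by
    rwa [Finset.centerMass_eq_of_sum_1 _ _ hw1] at hcm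
  have key : ∀ a : α, (∑ i ∈ t, w i * dist (z' i) a) ≤ dist c (e a) := by
    intro a
    refine le_of_forall_pos_le_add fun ε hε => ?_
    obtain ⟨n, hn⟩ : ∃ n, dist a (b n) < ε / 2 :=
      Metric.mem_closure_range_iff.1 (hb a) (ε / 2) (by positivity)
    have hcoord : (c : ℕ → ℝ) n = ∑ i ∈ t, w i * (z i : ℕ → ℝ) n := by
      rw [← hcsum, lp_coeFn_sum]
      rw [Finset.sum_apply]
      exact Finset.sum_congr rfl fun i _ => by rw [lp.coeFn_smul]; rfl
    have hz_coord : ∀ i ∈ t, (z i : ℕ → ℝ) n = dist (z' i) (b n) - dist (b 0) (b n) := by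
      intro i hi
      rw [← hz' i hi]
      rfl
    have hea : (e a : ℕ → ℝ) n = dist a (b n) - dist (b 0) (b n) := rfl
    have step1 : (∑ i ∈ t, w i * dist (z' i) a)
        ≤ ∑ i ∈ t, w i * (dist (z' i) (b n) + dist (b n) a) :=
      Finset.sum_le_sum fun i hi =>
        mul_le_mul_of_nonneg_left (dist_triangle _ _ _) (hw0 i hi)
    have step2 : (∑ i ∈ t, w i * (dist (z' i) (b n) + dist (b n) a))
        = (c : ℕ → ℝ) n + dist (b 0) (b n) + dist (b n) a := by
      have hterm : ∀ i ∈ t, w i * (dist (z' i) (b n) + dist (b n) a)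
          = w i * ((z i : ℕ → ℝ) n) + w i * dist (b 0) (b n) + w i * dist (b n) a := by
        intro i hi
        rw [hz_coord i hi]
        ring
      rw [Finset.sum_congr rfl hterm, Finset.sum_add_distrib, Finset.sum_add_distrib,
        ← Finset.sum_mul, ← Finset.sum_mul, hw1, one_mul, one_mul, hcoord]
    have habs : (c : ℕ → ℝ) n - (e a : ℕ → ℝ) n ≤ dist c (e a) := by
      have h1 : ‖((c - e a : lp (fun _ : ℕ => ℝ) ∞) : ℕ → ℝ) n‖ ≤ ‖c - e a‖ :=
        lp.norm_apply_le_norm ENNReal.top_ne_zero _ n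
      rw [lp.coeFn_sub] at h1
      rw [dist_eq_norm]
      exact le_trans (le_abs_self _) h1
    have hba : dist (b n) a = dist a (b n) := dist_comm _ _
    have hrw : (c : ℕ → ℝ) n + dist (b 0) (b n) + dist (b n) a
        = ((c : ℕ → ℝ) n - (e a : ℕ → ℝ) n) + dist a (b n) + dist (b n) a := by
      rw [hea]; ring
    calc (∑ i ∈ t, w i * dist (z' i) a)
        ≤ (c : ℕ → ℝ) n + dist (b 0) (b n) + dist (b n) a := step1.trans step2.le
      _ = ((c : ℕ → ℝ) n - (e a : ℕ → ℝ) n) + dist a (b n) + dist (b n) a := hrw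
      _ ≤ dist c (e a) + ε / 2 + ε / 2 := by
          rw [hba]; exact add_le_add (add_le_add habs hn.le) hn.le
      _ = dist c (e a) + ε := by ring
  obtain ⟨i0, hi0t, hi0⟩ : ∃ i ∈ t, 0 < w i := by
    by_contra h
    push_neg at h
    have : (∑ i ∈ t, w i) ≤ 0 := Finset.sum_nonpos h
    linarith
  refine ⟨z' i0, ?_⟩
  have hdist0 : dist c (e (z' i0)) = 0 := by
    have hle : ∀ ε > (0:ℝ), dist c (e (z' i0)) ≤ ε := by
      intro ε hε
      have hδ : 0 < ε / (1 + 1 / w i0) := by positivity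
      obtain ⟨y, hy, hya⟩ := Metric.mem_closure_iff.1 hcl _ hδ
      obtain ⟨a, rfl⟩ := hy
      have h1 : w i0 * dist (z' i0) a ≤ dist c (e a) := by
        refine le_trans ?_ (key a)
        exact Finset.single_le_sum (f := fun i => w i * dist (z' i) a)
          (fun i hi => mul_nonneg (hw0 i hi) dist_nonneg) hi0t
      have h2 : dist (z' i0) a ≤ dist c (e a) / w i0 := by
        rw [le_div_iff₀ hi0]
        linarith [h1]
      have h3 : dist c (e (z' i0)) ≤ dist c (e a) + dist (e a) (e (z' i0)) :=
        dist_triangle _ _ _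
      have h4 : dist (e a) (e (z' i0)) = dist a (z' i0) := he.dist_eq _ _
      have h5 : dist c (e (z' i0)) ≤ dist c (e a) * (1 + 1 / w i0) := by
        have h4' : dist (e a) (e (z' i0)) = dist (z' i0) a := by
          rw [h4, dist_comm]
        calc dist c (e (z' i0)) ≤ dist c (e a) + dist (z' i0) a := by rw [← h4']; exact h3
          _ ≤ dist c (e a) + dist c (e a) / w i0 := by linarith [h2]
          _ = dist c (e a) * (1 + 1 / w i0) := by ring
      have h6 : dist c (e a) * (1 + 1 / w i0) < (ε / (1 + 1 / w i0)) * (1 + 1 / w i0) := by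
        have hpos : (0:ℝ) < 1 + 1 / w i0 := by positivity
        exact mul_lt_mul_of_pos_right hya hpos
      have h7 : (ε / (1 + 1 / w i0)) * (1 + 1 / w i0) = ε := by
        field_simp
      linarith
    have hle0 : dist c (e (z' i0)) ≤ 0 :=
      le_of_forall_pos_le_add fun ε hε => by simpa using hle ε hε
    exact le_antisymm hle0 dist_nonneg
  exact (eq_of_dist_eq_zero hdist0).symm

end AuxKW

open scoped ENNReal

/-- If `M` is a separable metrizable ANR and `X ⊆ M` is homotopy dense, then there are an
open neighborhood `W` of the diagonal in `M × M` and a continuous map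
`λ : W × [0,1] → M` such that `λ(x,y,0) = x`, `λ(x,y,1) = y`, `λ(x,x,t) = x`, and
`λ(x,y,t) ∈ X` whenever `x ≠ y` and `t ∈ (0,1)`. -/
theorem statement5 {M : Type} [TopologicalSpace M] [TopologicalSpace.MetrizableSpace M]
    [TopologicalSpace.SeparableSpace M] (hANR : IsANR M)
    (X : Set M) (hX : HomotopyDense X) :
    ∃ (W : Set (M × M)) (l : M × M × I → M),
      IsOpen W ∧ (∀ x : M, (x, x) ∈ W) ∧
      ContinuousOn l {p : M × M × I | (p.1, p.2.1) ∈ W} ∧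
      (∀ x y : M, (x, y) ∈ W →
        (l (x, y, 0) = x ∧ l (x, y, 1) = y) ∧
        (∀ t : I, l (x, x, t) = x) ∧
        (x ≠ y → ∀ t : I, t ≠ 0 → t ≠ 1 → l (x, y, t) ∈ X)) := by
  classical
  obtain ⟨H, Hcont, H0, HX⟩ := hX
  rcases isEmpty_or_nonempty M with hM | hM
  · exact ⟨Set.univ, fun p => p.1, isOpen_univ, fun x => mem_univ _,
      continuous_fst.continuousOn, fun x => isEmptyElim x⟩
  letI : MetricSpace M := TopologicalSpace.metrizableSpaceMetric M
  let b : ℕ → M := TopologicalSpace.denseSeq M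
  have hb : DenseRange b := TopologicalSpace.denseRange_denseSeq M
  set e : M → lp (fun _ : ℕ => ℝ) ∞ := KuratowskiEmbedding.embeddingOfSubset b with he_def
  have he : Isometry e := KuratowskiEmbedding.embeddingOfSubset_isometry b hb
  set C : Set (lp (fun _ : ℕ => ℝ) ∞) := convexHull ℝ (Set.range e) with hC_def
  have heC : ∀ m, e m ∈ C := fun m => subset_convexHull ℝ _ (Set.mem_range_self m)
  let f : M → C := fun m => ⟨e m, heC m⟩
  have hfiso : Isometry f := fun x y => he x y
  have hf : IsClosedEmbedding f := by
    refine ⟨hfiso.isEmbedding, ?_⟩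
    have hrange : Set.range f = Subtype.val ⁻¹' closure (Set.range e) := by
      ext p
      constructor
      · rintro ⟨m, rfl⟩
        exact subset_closure (Set.mem_range_self m)
      · intro hp
        obtain ⟨m, hm⟩ := aux_closed b hb p.1 p.2 hp
        exact ⟨m, Subtype.ext hm⟩
    rw [hrange]
    exact isClosed_closure.preimage continuous_subtype_val
  haveI : TopologicalSpace.MetrizableSpace ↥C :=
    inferInstance
  obtain ⟨U, r, hUopen, hUrange, hrcont, hrf⟩ := hANR (↥C) f hf
  -- the segment map
  have hsegmem : ∀ (x y : M) (t : I), (1 - (t:ℝ)) • e x + (t:ℝ) • e y ∈ C := fun x y t =>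
    (convex_convexHull ℝ _) (heC x) (heC y) (sub_nonneg.2 t.2.2) t.2.1 (by ring)
  let seg : M × M × I → ↥C := fun p =>
    ⟨(1 - (p.2.2:ℝ)) • e p.1 + (p.2.2:ℝ) • e p.2.1, hsegmem _ _ _⟩
  have hcoI : Continuous fun p : M × M × I => ((p.2.2 : ℝ)) :=
    continuous_subtype_val.comp (continuous_snd.comp continuous_snd)
  have hsegcont : Continuous seg := by
    refine Continuous.subtype_mk ?_ _
    exact ((continuous_const.sub hcoI).smul (he.continuous.comp continuous_fst)).add
      (hcoI.smul (he.continuous.comp (continuous_fst.comp continuous_snd)))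
  have hsegxx : ∀ (x : M) (t : I), seg (x, x, t) = f x := by
    intro x t
    apply Subtype.ext
    show (1 - (t:ℝ)) • e x + (t:ℝ) • e x = e x
    rw [← add_smul, sub_add_cancel, one_smul]
  have hseg0 : ∀ x y : M, seg (x, y, 0) = f x := by
    intro x y
    apply Subtype.ext
    show (1 - ((0:I):ℝ)) • e x + ((0:I):ℝ) • e y = e x
    simp
  have hseg1 : ∀ x y : M, seg (x, y, 1) = f y := by
    intro x y
    apply Subtype.ext
    show (1 - ((1:I):ℝ)) • e x + ((1:I):ℝ) • e y = e y
    simp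
  -- the open set W
  set W : Set (M × M) := {q | ∀ t : I, seg (q.1, q.2, t) ∈ U} with hW_def
  have hWopen : IsOpen W := by
    rw [isOpen_iff_forall_mem_open]
    intro q hq
    have hVopen : IsOpen {p : (M × M) × I | seg (p.1.1, p.1.2, p.2) ∈ U} := by
      have hc : Continuous fun p : (M × M) × I => seg (p.1.1, p.1.2, p.2) := by
        refine hsegcont.comp ?_
        exact (continuous_fst.comp continuous_fst).prodMk
          ((continuous_snd.comp continuous_fst).prodMk continuous_snd)
      exact hUopen.preimage hc
    have hsub : ({q} : Set (M × M)) ×ˢ (Set.univ : Set I)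
        ⊆ {p : (M × M) × I | seg (p.1.1, p.1.2, p.2) ∈ U} := by
      rintro ⟨q', t⟩ ⟨hq', -⟩
      rcases Set.mem_singleton_iff.1 hq' with rfl
      exact hq t
    obtain ⟨V1, V2, hV1, hV2, hqV1, hIV2, hVsub⟩ :=
      generalized_tube_lemma isCompact_singleton isCompact_univ hVopen hsub
    refine ⟨V1, ?_, hV1, hqV1 rfl⟩
    intro q' hq' t
    exact hVsub (Set.mk_mem_prod hq' (hIV2 (Set.mem_univ t)))
  have hWdiag : ∀ x : M, (x, x) ∈ W := by
    intro x t
    rw [hsegxx]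
    exact hUrange (Set.mem_range_self x)
  -- the time-rescaling map
  have hφmem : ∀ p : M × M × I,
      (p.2.2:ℝ) * (1 - (p.2.2:ℝ)) * min (dist p.1 p.2.1) 1 ∈ I := by
    intro p
    obtain ⟨ht0, ht1⟩ := p.2.2.2
    have hm0 : (0:ℝ) ≤ min (dist p.1 p.2.1) 1 := le_min dist_nonneg zero_le_one
    have hm1 : min (dist p.1 p.2.1) 1 ≤ 1 := min_le_right _ _
    constructor
    · exact mul_nonneg (mul_nonneg ht0 (sub_nonneg.2 ht1)) hm0
    · have hq0 : (0:ℝ) ≤ (p.2.2:ℝ) * (1 - (p.2.2:ℝ)) := mul_nonneg ht0 (sub_nonneg.2 ht1)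
      have hq1 : (p.2.2:ℝ) * (1 - (p.2.2:ℝ)) ≤ 1 := by nlinarith
      calc (p.2.2:ℝ) * (1 - (p.2.2:ℝ)) * min (dist p.1 p.2.1) 1
          ≤ 1 * 1 := mul_le_mul hq1 hm1 hm0 zero_le_one
        _ = 1 := mul_one 1
  let Φ : M × M × I → I := fun p => ⟨_, hφmem p⟩
  have hΦcont : Continuous Φ := by
    refine Continuous.subtype_mk ?_ _
    have hd : Continuous fun p : M × M × I => dist p.1 p.2.1 :=
      continuous_fst.dist (continuous_fst.comp continuous_snd)
    exact ((hcoI.mul (continuous_const.sub hcoI)).mul (hd.min continuous_const))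
  -- the map l
  refine ⟨W, fun p => H (r (seg p), Φ p), hWopen, hWdiag, ?_, ?_⟩
  · refine Hcont.comp_continuousOn (ContinuousOn.prodMk ?_ hΦcont.continuousOn)
    refine hrcont.comp hsegcont.continuousOn ?_
    intro p hp
    exact hp p.2.2
  · intro x y hxy
    refine ⟨⟨?_, ?_⟩, ?_, ?_⟩
    · show H (r (seg (x, y, 0)), Φ (x, y, 0)) = x
      have hΦ0 : Φ (x, y, 0) = 0 := Subtype.ext (by simp [Φ])
      rw [hseg0, hrf, hΦ0, H0]
    · show H (r (seg (x, y, 1)), Φ (x, y, 1)) = y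
      have hΦ1 : Φ (x, y, 1) = 0 := Subtype.ext (by simp [Φ])
      rw [hseg1, hrf, hΦ1, H0]
    · intro t
      show H (r (seg (x, x, t)), Φ (x, x, t)) = x
      have hΦt : Φ (x, x, t) = 0 := Subtype.ext (by simp [Φ])
      rw [hsegxx, hrf, hΦt, H0]
    · intro hne t ht0 ht1
      show H (r (seg (x, y, t)), Φ (x, y, t)) ∈ X
      have htpos : (0:ℝ) < (t:ℝ) := by
        rcases lt_or_eq_of_le t.2.1 with h | h
        · exact h
        · exact absurd (Subtype.ext h.symm) ht0
      have ht1pos : (0:ℝ) < 1 - (t:ℝ) := by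
        rcases lt_or_eq_of_le t.2.2 with h | h
        · linarith
        · exact absurd (Subtype.ext h) ht1
      have hmin : (0:ℝ) < min (dist ((x, y, t) : M × M × I).1 ((x, y, t) : M × M × I).2.1) 1 :=
        lt_min (dist_pos.2 hne) zero_lt_one
      have hpos : (0:ℝ) < (Φ (x, y, t) : ℝ) := mul_pos (mul_pos htpos ht1pos) hmin
      exact HX _ _ (fun h => hpos.ne' (congrArg Subtype.val h))
end

section
/- Let (M,d) be a metric space, W an open neighborhood of the diagonal in M×M, and λ:W×[0,1]→M a continuous map such that λ(x,x,t)=x for every x∈M and t∈[0,1]. Then for every compact set K⊆M and every ε>0 there exists δ>0 such that for every x∈K one has B(x,δ)×B(x,δ)⊆W and λ[B(x,δ)×B(x,δ)×[0,1]]⊆B(x,ε/2). -/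
open Set Topology unitInterval Metric

/-- Let `(M,d)` be a metric space, `W` an open neighborhood of the diagonal in `M × M`, and
`λ : W × [0,1] → M` a continuous map with `λ(x,x,t) = x`.  Then for every compact `K ⊆ M`
and `ε > 0` there is `δ > 0` such that for every `x ∈ K` we have
`B(x,δ) × B(x,δ) ⊆ W` and `λ[B(x,δ) × B(x,δ) × [0,1]] ⊆ B(x, ε/2)`. -/
theorem statement6 {M : Type*} [MetricSpace M]
    (W : Set (M × M)) (hWopen : IsOpen W) (hWdiag : ∀ x : M, (x, x) ∈ W)
    (l : M × M × I → M)
    (hl : ContinuousOn l {p : M × M × I | (p.1, p.2.1) ∈ W})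
    (hldiag : ∀ (x : M) (t : I), l (x, x, t) = x)
    (K : Set M) (hK : IsCompact K) (ε : ℝ) (hε : 0 < ε) :
    ∃ δ > (0 : ℝ), ∀ x ∈ K,
      (∀ y ∈ ball x δ, ∀ z ∈ ball x δ, (y, z) ∈ W) ∧
      (∀ y ∈ ball x δ, ∀ z ∈ ball x δ, ∀ t : I, l (y, z, t) ∈ ball x (ε / 2)) := by
  have key : ∀ x : M, ∃ r > 0, r ≤ ε / 8 ∧ ∀ y ∈ ball x r, ∀ z ∈ ball x r,
      (y, z) ∈ W ∧ ∀ t : I, l (y, z, t) ∈ ball x (ε / 4) := by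
    intro x
    set O : Set (M × M × I) := {p | (p.1, p.2.1) ∈ W} with hO
    have hOopen : IsOpen O := hWopen.preimage (by fun_prop)
    have hN : IsOpen (O ∩ l ⁻¹' (ball x (ε / 4))) :=
      hl.isOpen_inter_preimage hOopen isOpen_ball
    have hsub : ({x} : Set M) ×ˢ (({x} : Set M) ×ˢ (univ : Set I)) ⊆
        O ∩ l ⁻¹' (ball x (ε / 4)) := by
      rintro ⟨a, b, t⟩ ⟨ha, hb, -⟩
      simp only [mem_singleton_iff] at ha hb
      subst ha; subst hb
      refine ⟨hWdiag _, ?_⟩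
      simp only [mem_preimage, hldiag, mem_ball, dist_self]
      positivity
    obtain ⟨u, v, hu, hv, hxu, hxv, huv⟩ :=
      generalized_tube_lemma isCompact_singleton (isCompact_singleton.prod isCompact_univ)
        hN hsub
    obtain ⟨u', w, hu', hw, hxu', hIw, hu'w⟩ :=
      generalized_tube_lemma isCompact_singleton isCompact_univ hv hxv
    have hx1 : x ∈ u := hxu rfl
    have hx2 : x ∈ u' := hxu' rfl
    obtain ⟨r1, hr1, h1⟩ := Metric.isOpen_iff.1 hu x hx1
    obtain ⟨r2, hr2, h2⟩ := Metric.isOpen_iff.1 hu' x hx2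
    refine ⟨min (min r1 r2) (ε / 8), by positivity, min_le_right _ _, ?_⟩
    intro y hy z hz
    have hym : y ∈ ball x (min r1 r2) := ball_subset_ball (min_le_left _ _) hy
    have hzm : z ∈ ball x (min r1 r2) := ball_subset_ball (min_le_left _ _) hz
    have hmem : ∀ t : I, (y, z, t) ∈ O ∩ l ⁻¹' (ball x (ε / 4)) := by
      intro t
      apply huv
      refine ⟨h1 (ball_subset_ball (min_le_left _ _) hym), ?_⟩
      exact hu'w ⟨h2 (ball_subset_ball (min_le_right _ _) hzm), hIw (mem_univ t)⟩
    exact ⟨(hmem ⟨0, by norm_num, by norm_num⟩).1, fun t => (hmem t).2⟩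
  choose r hrpos hr8 hr using key
  rcases K.eq_empty_or_nonempty with hKe | ⟨x0, hx0⟩
  · exact ⟨1, one_pos, by simp [hKe]⟩
  obtain ⟨T, hTK, hTcov⟩ := hK.elim_nhds_subcover (fun x => ball x (r x / 2))
    (fun x _ => ball_mem_nhds x (by have := hrpos x; positivity))
  have hTne : T.Nonempty := by
    rcases mem_iUnion₂.1 (hTcov hx0) with ⟨i, hi, -⟩
    exact ⟨i, hi⟩
  refine ⟨T.inf' hTne (fun i => r i / 2), ?_, ?_⟩
  · rw [gt_iff_lt, Finset.lt_inf'_iff]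
    intro i _
    have := hrpos i; positivity
  · intro x hx
    rcases mem_iUnion₂.1 (hTcov hx) with ⟨i, hi, hxi⟩
    have hδle : T.inf' hTne (fun i => r i / 2) ≤ r i / 2 := Finset.inf'_le _ hi
    have hball : ball x (T.inf' hTne (fun i => r i / 2)) ⊆ ball i (r i) := by
      intro y hy
      rw [mem_ball] at *
      calc dist y i ≤ dist y x + dist x i := dist_triangle _ _ _
        _ < r i / 2 + r i / 2 := add_lt_add (lt_of_lt_of_le hy hδle) hxi
        _ = r i := by ring
    constructor
    · intro y hy z hz
      exact (hr i y (hball hy) z (hball hz)).1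
    · intro y hy z hz t
      have h4 := (hr i y (hball hy) z (hball hz)).2 t
      rw [mem_ball] at *
      calc dist (l (y, z, t)) x ≤ dist (l (y, z, t)) i + dist i x := dist_triangle _ _ _
        _ < ε / 4 + r i / 2 := by
            refine add_lt_add h4 ?_
            rw [dist_comm]; exact lt_of_lt_of_le hxi le_rfl
        _ ≤ ε / 4 + ε / 16 := by linarith [hr8 i]
        _ < ε / 2 := by linarith
end

section
/- Let M be a separable metrizable absolute neighborhood retract with a metric d generating its topology, equipped with a continuous binary operation *:M×M→M and continuous unary operations u,v:M→M such that u(x)*v(x)=x for all x∈M. Let X be a homotopy dense subset of M such that for all x,y∈M, x*y∈X if and only if x∈X and y∈X. Let vC be a class of pairs (K,C) with K compact metrizable and C⊆K, and assume the pair (M,X) is everywhere vC-preuniversal. Then for any ε>0, pair (K,C)∈vC, closed subspace F⊆K, finite-dimensional compact metrizable space Z, and continuous maps f:F→Z and g:Z→X, there exists a continuous map h:F→M such that d(h(x),g(f(x)))<ε for every x∈F and h⁻¹[X]=F∩C. -/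
open Set Topology unitInterval

/-- The pair `(M, X)` is everywhere `vC`-preuniversal. -/
def EverywherePreuniversalPair {M : Type} [TopologicalSpace M] (X : Set M)
    (vC : (K : Type) → [TopologicalSpace K] → Set K → Prop) : Prop :=
  ∀ U : Set M, IsOpen U → U.Nonempty →
    ∀ (K : Type) [TopologicalSpace K] [CompactSpace K] [TopologicalSpace.MetrizableSpace K]
      (C : Set K), vC K C →
      ∃ f : K → M, Continuous f ∧ f ⁻¹' X = C ∧ Set.range f ⊆ U

/-- `CovDimLE Z n` means the covering dimension of `Z` is at most `n`: every open cover
of `Z` admits an open refinement in which every point lies in at most `n + 1` members. -/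
def CovDimLE (Z : Type*) [TopologicalSpace Z] (n : ℕ) : Prop :=
  ∀ 𝒰 : Set (Set Z), IsOpenCover 𝒰 →
    ∃ 𝒱 : Set (Set Z), IsOpenCover 𝒱 ∧ (∀ V ∈ 𝒱, ∃ U ∈ 𝒰, V ⊆ U) ∧
      ∀ x : Z, {V ∈ 𝒱 | x ∈ V}.encard ≤ n + 1

/-- A space is finite-dimensional if its covering dimension is at most `n` for some `n`. -/
def FiniteCovDim (Z : Type*) [TopologicalSpace Z] : Prop :=
  ∃ n : ℕ, CovDimLE Z n

open BoundedContinuousFunction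

/-! ### Tools -/

lemma unifNear {α β : Type*} [PseudoMetricSpace α] [PseudoMetricSpace β]
    {W : α → β} (hW : Continuous W) {S : Set α} (hS : IsCompact S)
    {ε : ℝ} (hε : 0 < ε) :
    ∃ δ > 0, ∀ p ∈ S, ∀ a, dist a p < δ → dist (W a) (W p) < ε := by
  rcases S.eq_empty_or_nonempty with hSe | hSne
  · exact ⟨1, one_pos, by simp [hSe]⟩
  have key : ∀ p : α, ∃ d > 0, ∀ a, dist a p < d → dist (W a) (W p) < ε / 2 := by
    intro p
    have := Metric.continuousAt_iff.1 (hW.continuousAt (x := p)) (ε / 2) (by positivity)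
    rcases this with ⟨d, hd, hball⟩
    exact ⟨d, hd, fun a ha => hball ha⟩
  choose d hd hball using key
  obtain ⟨t, hts, hcov⟩ := hS.elim_nhds_subcover (fun p => Metric.ball p (d p / 2))
    (fun p _ => Metric.ball_mem_nhds p (by have := hd p; linarith))
  have htne : t.Nonempty := by
    rcases hSne with ⟨p, hp⟩
    rcases mem_iUnion₂.1 (hcov hp) with ⟨q, hq, _⟩
    exact ⟨q, hq⟩
  refine ⟨t.inf' htne (fun p => d p / 2), ?_, ?_⟩
  · apply (Finset.lt_inf'_iff _).2
    intro p _
    have := hd p; linarith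
  · intro p hp a ha
    rcases mem_iUnion₂.1 (hcov hp) with ⟨q, hq, hpq⟩
    have hδq : t.inf' htne (fun p => d p / 2) ≤ d q / 2 := Finset.inf'_le _ hq
    have h1 : dist p q < d q := by
      have := Metric.mem_ball.1 hpq; linarith [hd q]
    have h2 : dist a q < d q := by
      have h3 := Metric.mem_ball.1 hpq
      calc dist a q ≤ dist a p + dist p q := dist_triangle _ _ _
        _ < d q / 2 + d q / 2 := by have := lt_of_lt_of_le ha hδq; linarith
        _ = d q := by ring
    have e1 := hball q a h2
    have e2 := hball q p h1
    calc dist (W a) (W p) ≤ dist (W a) (W q) + dist (W p) (W q) := dist_triangle_right _ _ _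
      _ < ε / 2 + ε / 2 := add_lt_add e1 e2
      _ = ε := by ring

section Chain

variable {M : Type*}

def Wk (mul : M → M → M) : (k : ℕ) → (Fin k → M) → M → M
  | 0, _, b => b
  | (k+1), a, b => mul (a 0) (Wk mul k (fun i => a i.succ) b)

lemma contWk [TopologicalSpace M] (mul : M → M → M)
    (hmul : Continuous fun p : M × M => mul p.1 p.2) :
    ∀ k, Continuous (fun p : (Fin k → M) × M => Wk mul k p.1 p.2) := by
  intro k
  induction k with
  | zero => simpa [Wk] using continuous_snd
  | succ k ih =>
      have h1 : Continuous (fun p : (Fin (k+1) → M) × M => p.1 0) :=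
        (continuous_apply 0).comp continuous_fst
      have h2 : Continuous (fun p : (Fin (k+1) → M) × M =>
          ((fun i : Fin k => p.1 i.succ), p.2)) :=
        (continuous_pi fun i => (continuous_apply i.succ).comp continuous_fst).prodMk
          continuous_snd
      have := hmul.comp (h1.prodMk (ih.comp h2))
      simpa [Wk, Function.comp_def] using this

lemma Wk_section (mul : M → M → M) (u v : M → M)
    (huv : ∀ x, mul (u x) (v x) = x) :
    ∀ k (m : M), Wk mul k (fun i => u (v^[(i : ℕ)] m)) (v^[k] m) = m := by
  intro k
  induction k with
  | zero => intro m; simp [Wk]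
  | succ k ih =>
      intro m
      have htail : (fun i : Fin k => u (v^[((i.succ : Fin (k+1)) : ℕ)] m))
          = fun i : Fin k => u (v^[(i : ℕ)] (v m)) := by
        funext i
        simp [Function.iterate_succ_apply]
      calc Wk mul (k+1) (fun i => u (v^[(i : ℕ)] m)) (v^[k+1] m)
          = mul (u m) (Wk mul k (fun i : Fin k => u (v^[(i : ℕ)] (v m))) (v^[k] (v m))) := by
            simp only [Wk]
            rw [htail]
            simp [Function.iterate_succ_apply]
        _ = mul (u m) (v m) := by rw [ih (v m)]
        _ = m := huv m

lemma Wk_mem (mul : M → M → M) (X : Set M)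
    (hXmul : ∀ x y, mul x y ∈ X ↔ x ∈ X ∧ y ∈ X) :
    ∀ k (a : Fin k → M) (b : M), (Wk mul k a b ∈ X ↔ (∀ i, a i ∈ X) ∧ b ∈ X) := by
  intro k
  induction k with
  | zero => intro a b; simp [Wk]
  | succ k ih =>
      intro a b
      simp only [Wk, hXmul, ih]
      constructor
      · rintro ⟨h0, hs, hb⟩
        refine ⟨fun i => ?_, hb⟩
        rcases Fin.eq_zero_or_eq_succ i with rfl | ⟨j, rfl⟩
        · exact h0
        · exact hs j
      · rintro ⟨ha, hb⟩
        exact ⟨ha 0, fun j => ha j.succ, hb⟩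

end Chain

/-! ### ANR machinery -/

section Machinery

variable {M : Type} [MetricSpace M]

noncomputable def kurE (m₀ m : M) : M →ᵇ ℝ :=
  BoundedContinuousFunction.mkOfBound
    ⟨fun x => dist m x - dist m₀ x, by fun_prop⟩
    (2 * dist m m₀)
    (by
      intro x y
      have h1 : |dist m x - dist m₀ x| ≤ dist m m₀ := abs_dist_sub_le m m₀ x
      have h2 : |dist m y - dist m₀ y| ≤ dist m m₀ := abs_dist_sub_le m m₀ y
      show |dist m x - dist m₀ x - (dist m y - dist m₀ y)| ≤ 2 * dist m m₀
      have : |dist m x - dist m₀ x - (dist m y - dist m₀ y)| ≤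
          |dist m x - dist m₀ x| + |dist m y - dist m₀ y| := abs_sub _ _
      linarith)

lemma kurE_apply (m₀ m x : M) : kurE m₀ m x = dist m x - dist m₀ x := rfl

lemma kurE_isometry (m₀ : M) : Isometry (kurE m₀) := by
  apply Isometry.of_dist_eq
  intro m m'
  apply le_antisymm
  · apply (BoundedContinuousFunction.dist_le dist_nonneg).2
    intro x
    rw [Real.dist_eq, kurE_apply, kurE_apply]
    have := abs_dist_sub_le m m' x
    have h : dist m x - dist m₀ x - (dist m' x - dist m₀ x) = dist m x - dist m' x := by ring
    rw [h]
    exact this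
  · have := BoundedContinuousFunction.dist_coe_le_dist (f := kurE m₀ m) (g := kurE m₀ m') m'
    rw [kurE_apply, kurE_apply, Real.dist_eq] at this
    simpa [dist_comm] using this

lemma kurE_closed_in_hull (m₀ : M) (f : M →ᵇ ℝ)
    (hhull : f ∈ convexHull ℝ (Set.range (kurE m₀)))
    (hcl : f ∈ closure (Set.range (kurE m₀))) : f ∈ Set.range (kurE m₀) := by
  classical
  rw [convexHull_eq] at hhull
  obtain ⟨ι, t, w, z, hw0, hw1, hzA, hcm⟩ := hhull
  have hMne : Nonempty M := ⟨m₀⟩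
  set mm : ι → M := fun i => if h : i ∈ t then (hzA i h).choose else m₀ with hmm
  have hmm_spec : ∀ i ∈ t, kurE m₀ (mm i) = z i := by
    intro i hi
    simp only [hmm, dif_pos hi]
    exact (hzA i hi).choose_spec
  have key : ∀ m' : M, (∑ i ∈ t, w i * dist (mm i) m') ≤ dist f (kurE m₀ m') := by
    intro m'
    have hfval : f m' = ∑ i ∈ t, w i * z i m' := by
      rw [← hcm, Finset.centerMass_eq_of_sum_1 _ _ hw1]
      rw [BoundedContinuousFunction.sum_apply]
      simp [BoundedContinuousFunction.smul_apply, smul_eq_mul]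
    have hzval : ∀ i ∈ t, z i m' = dist (mm i) m' - dist m₀ m' := by
      intro i hi
      rw [← hmm_spec i hi, kurE_apply]
    have hsum : f m' = (∑ i ∈ t, w i * dist (mm i) m') - dist m₀ m' := by
      rw [hfval, Finset.sum_congr rfl (fun i hi => by rw [hzval i hi])]
      rw [Finset.sum_congr rfl (fun i hi => (mul_sub (w i) _ _ : w i * _ = _))]
      rw [Finset.sum_sub_distrib, ← Finset.sum_mul, hw1, one_mul]
    have heval : kurE m₀ m' m' = 0 - dist m₀ m' := by
      rw [kurE_apply]; simp
    have hnonneg : 0 ≤ ∑ i ∈ t, w i * dist (mm i) m' :=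
      Finset.sum_nonneg fun i hi => mul_nonneg (hw0 i hi) dist_nonneg
    have habs : |f m' - kurE m₀ m' m'| ≤ dist f (kurE m₀ m') := by
      rw [← Real.dist_eq]
      exact BoundedContinuousFunction.dist_coe_le_dist m'
    rw [hsum, heval] at habs
    have : |(∑ i ∈ t, w i * dist (mm i) m') - dist m₀ m' - (0 - dist m₀ m')|
        = ∑ i ∈ t, w i * dist (mm i) m' := by
      rw [abs_of_nonneg]; · ring_nf
      · linarith
    rw [this] at habs
    exact habs
  have hi0 : ∃ i₀ ∈ t, 0 < w i₀ := by
    by_contra hcon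
    push_neg at hcon
    have : (∑ i ∈ t, w i) ≤ 0 := Finset.sum_nonpos fun i hi => hcon i hi
    rw [hw1] at this; linarith
  obtain ⟨i₀, hi₀t, hwi₀⟩ := hi0
  have hseq : ∀ k : ℕ, ∃ m : M, dist f (kurE m₀ m) < 1 / (k + 1) := by
    intro k
    have := Metric.mem_closure_iff.1 hcl (1 / (k + 1)) (by positivity)
    obtain ⟨b, ⟨m, rfl⟩, hb⟩ := this
    exact ⟨m, hb⟩
  choose sq hsq using hseq
  have hle : ∀ k : ℕ, dist f (kurE m₀ (mm i₀)) ≤ (1 + 1 / w i₀) * (1 / (k + 1)) := by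
    intro k
    have h1 : w i₀ * dist (mm i₀) (sq k) ≤ ∑ i ∈ t, w i * dist (mm i) (sq k) :=
      Finset.single_le_sum (fun i hi => mul_nonneg (hw0 i hi) dist_nonneg) hi₀t
    have h2 := (key (sq k)).trans_lt (hsq k)
    have h3 : dist (mm i₀) (sq k) ≤ (1 / (k + 1)) / w i₀ := by
      rw [le_div_iff₀ hwi₀]
      calc dist (mm i₀) (sq k) * w i₀ = w i₀ * dist (mm i₀) (sq k) := by ring
        _ ≤ _ := h1
        _ ≤ 1 / (k+1) := le_of_lt h2
    calc dist f (kurE m₀ (mm i₀))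
        ≤ dist f (kurE m₀ (sq k)) + dist (kurE m₀ (sq k)) (kurE m₀ (mm i₀)) :=
          dist_triangle _ _ _
      _ = dist f (kurE m₀ (sq k)) + dist (sq k) (mm i₀) := by
          rw [(kurE_isometry m₀).dist_eq]
      _ ≤ 1 / (k+1) + (1 / (k + 1)) / w i₀ := by
          refine add_le_add (le_of_lt (hsq k)) ?_
          rw [dist_comm]; exact h3
      _ = (1 + 1 / w i₀) * (1 / (k + 1)) := by ring
  have hdist0 : dist f (kurE m₀ (mm i₀)) = 0 := by
    by_contra hne
    have hρ : 0 < dist f (kurE m₀ (mm i₀)) := lt_of_le_of_ne dist_nonneg (Ne.symm hne)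
    have hcpos : (0:ℝ) < 1 + 1 / w i₀ := by positivity
    obtain ⟨k, hk⟩ := exists_nat_gt ((1 + 1 / w i₀) / dist f (kurE m₀ (mm i₀)))
    have hk1 : (1 + 1 / w i₀) / dist f (kurE m₀ (mm i₀)) < (k : ℝ) + 1 := by linarith [hk]
    have hfin : (1 + 1 / w i₀) * (1 / (k+1)) < dist f (kurE m₀ (mm i₀)) := by
      rw [div_lt_iff₀ hρ] at hk1
      have hkpos : (0:ℝ) < (k:ℝ) + 1 := by positivity
      rw [mul_one_div, div_lt_iff₀ hkpos]
      linarith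
    have := (hle k).trans_lt hfin
    exact lt_irrefl _ this
  have : f = kurE m₀ (mm i₀) := eq_of_dist_eq_zero hdist0
  exact ⟨mm i₀, this.symm⟩

lemma anr_machinery (hANR : IsANR M) (m₀ : M) :
    ∃ (e : M → (M →ᵇ ℝ)) (U : Set ↥(convexHull ℝ (Set.range e)))
      (r : ↥(convexHull ℝ (Set.range e)) → M),
      Isometry e ∧ ContinuousOn r U ∧
      (∀ m : M, ∀ hm : e m ∈ convexHull ℝ (Set.range e),
        (⟨e m, hm⟩ : ↥(convexHull ℝ (Set.range e))) ∈ U ∧ r ⟨e m, hm⟩ = m) ∧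
      (∀ P : Set M, IsCompact P → ∀ δ : ℝ, 0 < δ → ∃ γ > 0, ∀ p ∈ P,
        ∀ ξ : ↥(convexHull ℝ (Set.range e)),
          dist (ξ : M →ᵇ ℝ) (e p) < γ → ξ ∈ U ∧ dist (r ξ) p < δ) := by
  classical
  set e : M → (M →ᵇ ℝ) := kurE m₀ with he
  have hiso : Isometry e := kurE_isometry m₀
  set A : Set (M →ᵇ ℝ) := Set.range e with hA
  set hull : Set (M →ᵇ ℝ) := convexHull ℝ A with hhull
  set Y := ↥hull with hY
  set eY : M → Y := fun m => ⟨e m, subset_convexHull ℝ A ⟨m, rfl⟩⟩ with heY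
  have heYiso : Isometry eY := by
    apply Isometry.of_dist_eq
    intro a b
    rw [Subtype.dist_eq]
    exact hiso.dist_eq a b
  have hclosed : IsClosedEmbedding eY := by
    refine ⟨heYiso.isEmbedding, ?_⟩
    have hre : Set.range eY = Subtype.val ⁻¹' A := by
      ext y
      constructor
      · rintro ⟨m, rfl⟩; exact ⟨m, rfl⟩
      · rintro ⟨m, hm⟩
        exact ⟨m, Subtype.ext hm⟩
    rw [hre]
    apply isClosed_of_closure_subset
    intro y hy
    have h1 : (y : M →ᵇ ℝ) ∈ closure A := by
      have := (continuous_subtype_val (p := fun x => x ∈ hull)).closure_preimage_subset A hy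
      exact this
    exact kurE_closed_in_hull m₀ y y.2 h1
  obtain ⟨U, r, hUopen, hrange, hrcont, hretr⟩ := hANR Y eY hclosed
  refine ⟨e, U, r, hiso, hrcont, ?_, ?_⟩
  · intro m hm
    have h1 : (⟨e m, hm⟩ : Y) = eY m := by apply Subtype.ext; rfl
    constructor
    · rw [h1]; exact hrange ⟨m, rfl⟩
    · rw [h1]; exact hretr m
  · intro P hP δ hδ
    have stepA : ∀ p : M, ∃ γp : ℝ, 0 < γp ∧ γp ≤ δ / 2 ∧ ∀ ξ : Y,
        dist (ξ : M →ᵇ ℝ) (e p) < γp → ξ ∈ U ∧ dist (r ξ) p < δ / 2 := by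
      intro p
      have hpU : eY p ∈ U := hrange ⟨p, rfl⟩
      obtain ⟨ρ₁, hρ₁, hball⟩ := Metric.isOpen_iff.1 hUopen _ hpU
      have hcw : ContinuousWithinAt r U (eY p) := hrcont _ hpU
      rw [Metric.continuousWithinAt_iff] at hcw
      obtain ⟨ρ₂, hρ₂, hcw⟩ := hcw (δ / 2) (by positivity)
      refine ⟨min (min ρ₁ ρ₂) (δ / 2), by positivity, min_le_right _ _, ?_⟩
      intro ξ hξ
      have hdY : dist ξ (eY p) < min (min ρ₁ ρ₂) (δ/2) := by
        rw [Subtype.dist_eq]; exact hξ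
      have hξU : ξ ∈ U := hball (by
        apply Metric.mem_ball.2
        exact lt_of_lt_of_le hdY ((min_le_left _ _).trans (min_le_left _ _)))
      have hdist : dist (r ξ) (r (eY p)) < δ / 2 := by
        apply hcw hξU
        exact lt_of_lt_of_le hdY ((min_le_left _ _).trans (min_le_right _ _))
      rw [hretr p] at hdist
      exact ⟨hξU, hdist⟩
    choose γp hγp1 hγp2 hγp3 using stepA
    rcases P.eq_empty_or_nonempty with hPe | hPne
    · exact ⟨1, one_pos, by simp [hPe]⟩
    obtain ⟨t, hts, hcov⟩ := hP.elim_nhds_subcover (fun p => Metric.ball p (γp p / 2))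
      (fun p _ => Metric.ball_mem_nhds p (by have := hγp1 p; positivity))
    have htne : t.Nonempty := by
      rcases hPne with ⟨p, hp⟩
      rcases mem_iUnion₂.1 (hcov hp) with ⟨q, hq, _⟩
      exact ⟨q, hq⟩
    refine ⟨t.inf' htne (fun p => γp p / 2), ?_, ?_⟩
    · apply (Finset.lt_inf'_iff _).2
      intro p _
      have := hγp1 p; positivity
    · intro p hp ξ hξ
      rcases mem_iUnion₂.1 (hcov hp) with ⟨q, hq, hpq⟩
      have hδq : t.inf' htne (fun p => γp p / 2) ≤ γp q / 2 := Finset.inf'_le _ hq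
      have hpq' : dist p q < γp q / 2 := Metric.mem_ball.1 hpq
      have hnear : dist (ξ : M →ᵇ ℝ) (e q) < γp q := by
        calc dist (ξ : M →ᵇ ℝ) (e q) ≤ dist (ξ : M →ᵇ ℝ) (e p) + dist (e p) (e q) :=
              dist_triangle _ _ _
          _ = dist (ξ : M →ᵇ ℝ) (e p) + dist p q := by rw [hiso.dist_eq]
          _ < γp q / 2 + γp q / 2 := add_lt_add (lt_of_lt_of_le hξ hδq) hpq'
          _ = γp q := by ring
      obtain ⟨hξU, hrd⟩ := hγp3 q ξ hnear
      refine ⟨hξU, ?_⟩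
      calc dist (r ξ) p ≤ dist (r ξ) q + dist q p := dist_triangle _ _ _
        _ < δ / 2 + γp q / 2 := by
            refine add_lt_add hrd ?_
            rw [dist_comm]; exact hpq'
        _ ≤ δ / 2 + δ / 4 := by linarith [hγp2 q]
        _ < δ := by linarith

end Machinery


set_option maxHeartbeats 2000000 in
/-- Let `M` be a separable metrizable ANR with metric `d`, carrying a continuous binary
operation `*` and continuous `u, v` with `u(x) * v(x) = x`; let `X ⊆ M` be homotopy dense
with `x * y ∈ X ↔ x ∈ X ∧ y ∈ X`, and assume `(M, X)` is everywhere `vC`-preuniversal.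
Then for every `ε > 0`, pair `(K, C) ∈ vC`, closed `F ⊆ K`, finite-dimensional compact
metrizable space `Z` and maps `f : F → Z`, `g : Z → X`, there is a continuous map
`h : F → M` with `d(h, g ∘ f) < ε` and `h⁻¹[X] = F ∩ C`. -/
theorem statement10 {M : Type} [MetricSpace M] [TopologicalSpace.SeparableSpace M]
    (hANR : IsANR M)
    (mul : M → M → M) (hmul : Continuous fun p : M × M => mul p.1 p.2)
    (u v : M → M) (hu : Continuous u) (hv : Continuous v)
    (huv : ∀ x, mul (u x) (v x) = x)
    (X : Set M) (hX : HomotopyDense X)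
    (hXmul : ∀ x y, mul x y ∈ X ↔ x ∈ X ∧ y ∈ X)
    (vC : (K : Type) → [TopologicalSpace K] → Set K → Prop)
    (hpre : EverywherePreuniversalPair X vC)
    (ε : ℝ) (hε : 0 < ε)
    (K : Type) [TopologicalSpace K] [CompactSpace K] [TopologicalSpace.MetrizableSpace K]
    (C : Set K) (hKC : vC K C)
    (F : Set K) (hF : IsClosed F)
    (Z : Type) [TopologicalSpace Z] [CompactSpace Z] [TopologicalSpace.MetrizableSpace Z]
    (hZ : FiniteCovDim Z)
    (f : F → Z) (hf : Continuous f)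
    (g : Z → M) (hg : Continuous g) (hgX : ∀ z, g z ∈ X) :
    ∃ h : F → M, Continuous h ∧ (∀ x : F, dist (h x) (g (f x)) < ε) ∧
      (∀ x : F, h x ∈ X ↔ (x : K) ∈ C) := by
  classical
  by_cases hFne : Nonempty F
  swap
  · exact ⟨fun x => g (f x), hg.comp hf,
      fun x => absurd ⟨x⟩ hFne, fun x => absurd ⟨x⟩ hFne⟩
  obtain ⟨x₀⟩ := hFne
  obtain ⟨Ho, hHcont, hH0, hHX⟩ := hX
  obtain ⟨n, hdim⟩ := hZ
  letI mK : MetricSpace K := TopologicalSpace.metrizableSpaceMetric K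
  letI mZ : MetricSpace Z := TopologicalSpace.metrizableSpaceMetric Z
  haveI hFcs : CompactSpace F := isCompact_iff_compactSpace.1 (hF.isCompact)
  -- basic maps
  set G : F → M := fun x => g (f x) with hG
  have hGcont : Continuous G := hg.comp hf
  set L : ℕ → F → M := fun j x => u (v^[j] (G x)) with hL
  have hLcont : ∀ j, Continuous (L j) := fun j => hu.comp ((hv.iterate j).comp hGcont)
  set R : F → M := fun x => v^[n+1] (G x) with hR
  have hRcont : Continuous R := (hv.iterate (n+1)).comp hGcont
  have hWG : ∀ x : F, Wk mul (n+1) (fun i : Fin (n+1) => L (i:ℕ) x) (R x) = G x :=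
    fun x => Wk_section mul u v huv (n+1) (G x)
  -- chain uniform continuity
  have hveccont : Continuous (fun x : F => ((fun i : Fin (n+1) => L (i:ℕ) x), R x)) :=
    (continuous_pi (fun i : Fin (n+1) => hLcont (i:ℕ))).prodMk hRcont
  obtain ⟨δ₀, hδ₀, hδ₀spec⟩ := unifNear (contWk mul hmul (n+1)) (isCompact_range hveccont) hε
  -- ANR machinery
  obtain ⟨e, U, r, hiso, hrcont, hretr, hctrl⟩ := anr_machinery hANR (g (f x₀))
  -- per-level retraction control
  have hγ : ∀ j : ℕ, ∃ γ > 0, ∀ p ∈ Set.range (L j),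
      ∀ ξ : ↥(convexHull ℝ (Set.range e)),
        dist (ξ : M →ᵇ ℝ) (e p) < γ → ξ ∈ U ∧ dist (r ξ) p < δ₀ / 2 :=
    fun j => hctrl _ (isCompact_range (hLcont j)) (δ₀/2) (by positivity)
  choose γf hγfpos hγfspec using hγ
  obtain ⟨γm, hγm, hγmle⟩ : ∃ γm > 0, ∀ j ≤ n, γm ≤ γf j := by
    refine ⟨(Finset.range (n+1)).inf' ⟨0, by simp⟩ γf, ?_, ?_⟩
    · apply (Finset.lt_inf'_iff _).2
      intro j _; exact hγfpos j
    · intro j hj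
      exact Finset.inf'_le _ (Finset.mem_range.2 (Nat.lt_succ_of_le hj))
  set δ₁ : ℝ := γm / 3 with hδ₁def
  have hδ₁ : 0 < δ₁ := by positivity
  -- small-oscillation cover of Z
  have hcov0 : ∀ z : Z, ∃ Wz : Set Z, IsOpen Wz ∧ z ∈ Wz ∧
      ∀ j ≤ n, ∀ y ∈ Wz, dist (u (v^[j] (g y))) (u (v^[j] (g z))) < δ₁ / 2 := by
    intro z
    refine ⟨⋂ j ∈ Finset.range (n+1),
      (fun y => u (v^[j] (g y))) ⁻¹' Metric.ball (u (v^[j] (g z))) (δ₁/2), ?_, ?_, ?_⟩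
    · exact isOpen_biInter_finset fun j _ =>
        Metric.isOpen_ball.preimage (hu.comp ((hv.iterate j).comp hg))
    · simp only [Set.mem_iInter, Set.mem_preimage]
      intro j _
      exact Metric.mem_ball_self (by positivity)
    · intro j hj y hy
      simp only [Set.mem_iInter, Set.mem_preimage] at hy
      exact Metric.mem_ball.1 (hy j (Finset.mem_range.2 (Nat.lt_succ_of_le hj)))
  choose WS hWSopen hWSmem hWSosc using hcov0
  obtain ⟨𝒱, ⟨h𝒱open, h𝒱cover⟩, h𝒱ref, h𝒱mult⟩ := hdim (Set.range WS)
    ⟨by rintro _ ⟨z, rfl⟩; exact hWSopen z,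
     Set.eq_univ_of_forall (fun z => ⟨WS z, ⟨z, rfl⟩, hWSmem z⟩)⟩
  -- finite subcover
  obtain ⟨VF, hVFsub, hVFopen, hVFcover, hVFosc, hVFmult⟩ :
      ∃ VF : Finset (Set Z), (∀ V ∈ VF, V ∈ 𝒱) ∧ (∀ V ∈ VF, IsOpen V) ∧
        (∀ z : Z, ∃ V ∈ VF, z ∈ V) ∧
        (∀ V ∈ VF, ∀ j ≤ n, ∀ z ∈ V, ∀ z' ∈ V,
          dist (u (v^[j] (g z))) (u (v^[j] (g z'))) < δ₁) ∧
        (∀ z : Z, (VF.filter (fun V => z ∈ V)).card ≤ n+1) := by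
    have hsub : (univ : Set Z) ⊆ ⋃ V : ↥𝒱, (V : Set Z) := by
      intro z _
      have hz : z ∈ ⋃₀ 𝒱 := h𝒱cover ▸ mem_univ z
      obtain ⟨V, hV, hzV⟩ := hz
      exact mem_iUnion.2 ⟨⟨V, hV⟩, hzV⟩
    obtain ⟨t, ht⟩ := isCompact_univ.elim_finite_subcover (fun V : ↥𝒱 => (V : Set Z))
      (fun V => h𝒱open V V.2) hsub
    refine ⟨t.image (fun V : ↥𝒱 => (V : Set Z)), ?_, ?_, ?_, ?_, ?_⟩
    · intro V hV
      obtain ⟨V₀, _, rfl⟩ := Finset.mem_image.1 hV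
      exact V₀.2
    · intro V hV
      obtain ⟨V₀, _, rfl⟩ := Finset.mem_image.1 hV
      exact h𝒱open _ V₀.2
    · intro z
      have := ht (mem_univ z)
      obtain ⟨V₀, hV₀t, hz⟩ := mem_iUnion₂.1 this
      exact ⟨V₀, Finset.mem_image.2 ⟨V₀, hV₀t, rfl⟩, hz⟩
    · intro V hV j hj z hz z' hz'
      obtain ⟨V₀, _, rfl⟩ := Finset.mem_image.1 hV
      obtain ⟨Uu, hUu, hVU⟩ := h𝒱ref V₀ V₀.2
      obtain ⟨zc, rfl⟩ := hUu
      have h1 := hWSosc zc j hj z (hVU hz)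
      have h2 := hWSosc zc j hj z' (hVU hz')
      calc dist (u (v^[j] (g z))) (u (v^[j] (g z')))
          ≤ dist (u (v^[j] (g z))) (u (v^[j] (g zc)))
            + dist (u (v^[j] (g z'))) (u (v^[j] (g zc))) := dist_triangle_right _ _ _
        _ < δ₁/2 + δ₁/2 := add_lt_add h1 h2
        _ = δ₁ := by ring
    · intro z
      have hsubset : (((t.image (fun V : ↥𝒱 => (V:Set Z))).filter (fun V => z ∈ V))
          : Set (Set Z)) ⊆ {V ∈ 𝒱 | z ∈ V} := by
        intro V hV
        simp only [Finset.coe_filter, Set.mem_setOf_eq] at hV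
        obtain ⟨hVmem, hzV⟩ := hV
        obtain ⟨V₀, _, rfl⟩ := Finset.mem_image.1 hVmem
        exact ⟨V₀.2, hzV⟩
      have h1 := (Set.encard_mono hsubset).trans (h𝒱mult z)
      rw [Set.encard_coe_eq_coe_finsetCard] at h1
      exact_mod_cast h1
  -- the kappa functions
  set κ : Set Z → Z → ℝ := fun V z => if (Vᶜ : Set Z) = ∅ then 1 else Metric.infDist z Vᶜ
    with hκdef
  have hκcont : ∀ V, Continuous (κ V) := by
    intro V
    by_cases hVc : (Vᶜ : Set Z) = ∅
    · simp only [hκdef, if_pos hVc]; exact continuous_const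
    · simp only [hκdef, if_neg hVc]; exact Metric.continuous_infDist_pt _
  have hκpos : ∀ V, IsOpen V → ∀ z : Z, (0 < κ V z ↔ z ∈ V) := by
    intro V hV z
    by_cases hVc : (Vᶜ : Set Z) = ∅
    · simp only [hκdef, if_pos hVc]
      have : V = univ := compl_empty_iff.1 hVc
      simp [this]
    · simp only [hκdef, if_neg hVc]
      rw [← IsClosed.notMem_iff_infDist_pos hV.isClosed_compl
        (nonempty_iff_ne_empty.2 hVc)]
      simp
  -- the sigma-index set and the open sets E sg
  set SS : Finset (Finset (Set Z)) :=
    VF.powerset.filter (fun sg => sg.Nonempty ∧ sg.card ≤ n+1) with hSSdef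
  set Esig : Finset (Set Z) → Set Z := fun sg =>
    ⋂ V ∈ sg, ({z | 0 < κ V z} ∩ ⋂ W ∈ VF, {z | W ∉ sg → κ W z < κ V z}) with hEdef
  have hEmem : ∀ sg (z : Z), z ∈ Esig sg ↔
      ∀ V ∈ sg, 0 < κ V z ∧ ∀ W ∈ VF, W ∉ sg → κ W z < κ V z := by
    intro sg z
    simp [hEdef, Set.mem_iInter]
  have hEopen : ∀ sg, IsOpen (Esig sg) := by
    intro sg
    apply isOpen_biInter_finset
    intro V _
    apply IsOpen.inter
    · exact isOpen_lt continuous_const (hκcont V)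
    · apply isOpen_biInter_finset
      intro W _
      by_cases hWsg : W ∈ sg
      · have : {z : Z | W ∉ sg → κ W z < κ V z} = univ := by
          ext z; simp [hWsg]
        rw [this]; exact isOpen_univ
      · have : {z : Z | W ∉ sg → κ W z < κ V z} = {z | κ W z < κ V z} := by
          ext z; simp [hWsg]
        rw [this]; exact isOpen_lt (hκcont W) (hκcont V)
  have hEsub : ∀ sg ∈ SS, ∀ V ∈ sg, Esig sg ⊆ V := by
    intro sg hsg V hV z hz
    have h1 := ((hEmem sg z).1 hz) V hV
    have hVVF : V ∈ VF := by
      have := Finset.mem_powerset.1 (Finset.mem_filter.1 hsg).1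
      exact this hV
    exact (hκpos V (hVFopen V hVVF) z).1 h1.1
  have hEdisj : ∀ sg ∈ SS, ∀ sg' ∈ SS, sg.card = sg'.card → sg ≠ sg' →
      ∀ z : Z, z ∈ Esig sg → z ∈ Esig sg' → False := by
    intro sg hsg sg' hsg' hc hne z hz hz'
    have h1 : ∃ V, V ∈ sg ∧ V ∉ sg' := by
      by_contra hcon
      push_neg at hcon
      exact hne (Finset.eq_of_subset_of_card_le (fun V hV => hcon V hV) (le_of_eq hc.symm))
    have h2 : ∃ W, W ∈ sg' ∧ W ∉ sg := by
      by_contra hcon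
      push_neg at hcon
      exact hne (Finset.eq_of_subset_of_card_le (fun V hV => hcon V hV) (le_of_eq hc)).symm
    obtain ⟨V, hVsg, hVnsg'⟩ := h1
    obtain ⟨W, hWsg', hWnsg⟩ := h2
    have hVF : sg ⊆ VF := Finset.mem_powerset.1 (Finset.mem_filter.1 hsg).1
    have hVF' : sg' ⊆ VF := Finset.mem_powerset.1 (Finset.mem_filter.1 hsg').1
    have e2 := (((hEmem sg z).1 hz) V hVsg).2 W (hVF' hWsg') hWnsg
    have e3 := (((hEmem sg' z).1 hz') W hWsg').2 V (hVF hVsg) hVnsg'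
    linarith
  have hEcov : ∀ z : Z, ∃ sg ∈ SS, z ∈ Esig sg := by
    intro z
    obtain ⟨V₁, hV₁VF, hzV₁⟩ := hVFcover z
    obtain ⟨V₀, hV₀VF, hV₀max⟩ := Finset.exists_max_image VF (fun V => κ V z) ⟨V₁, hV₁VF⟩
    have hposmax : 0 < κ V₀ z :=
      lt_of_lt_of_le ((hκpos V₁ (hVFopen V₁ hV₁VF) z).2 hzV₁) (hV₀max V₁ hV₁VF)
    have hsgsub : VF.filter (fun V => ∀ W ∈ VF, κ W z ≤ κ V z)
        ⊆ VF.filter (fun V => z ∈ V) := by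
      intro V hV
      obtain ⟨hVVF, hVmax⟩ := Finset.mem_filter.1 hV
      exact Finset.mem_filter.2 ⟨hVVF,
        (hκpos V (hVFopen V hVVF) z).1 (lt_of_lt_of_le hposmax (hVmax V₀ hV₀VF))⟩
    refine ⟨VF.filter (fun V => ∀ W ∈ VF, κ W z ≤ κ V z), ?_, ?_⟩
    · rw [hSSdef, Finset.mem_filter, Finset.mem_powerset]
      exact ⟨Finset.filter_subset _ _, ⟨V₀, Finset.mem_filter.2 ⟨hV₀VF, hV₀max⟩⟩,
        le_trans (Finset.card_le_card hsgsub) (hVFmult z)⟩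
    · rw [hEmem]
      intro V hV
      obtain ⟨hVVF, hVmax⟩ := Finset.mem_filter.1 hV
      constructor
      · exact lt_of_lt_of_le hposmax (hVmax V₀ hV₀VF)
      · intro W hWVF hWnsg
        have hnm : ¬ ∀ W' ∈ VF, κ W' z ≤ κ W z := by
          intro hall
          exact hWnsg (Finset.mem_filter.2 ⟨hWVF, hall⟩)
        push_neg at hnm
        obtain ⟨W', hW'VF, hW'⟩ := hnm
        exact lt_of_lt_of_le hW' (hVmax W' hW'VF)
  -- F-side sets
  set Ω : Finset (Set Z) → Set F := fun sg => f ⁻¹' (Esig sg) with hΩdef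
  have hΩopen : ∀ sg, IsOpen (Ω sg) := fun sg => (hEopen sg).preimage hf
  have hΩcov : ∀ x : F, ∃ sg ∈ SS, x ∈ Ω sg := fun x => by
    obtain ⟨sg, hsg, hz⟩ := hEcov (f x)
    exact ⟨sg, hsg, hz⟩
  have hΩdisj : ∀ sg ∈ SS, ∀ sg' ∈ SS, sg.card = sg'.card → sg ≠ sg' →
      ∀ x : F, x ∈ Ω sg → x ∈ Ω sg' → False :=
    fun sg hsg sg' hsg' hc hne x hx hx' => hEdisj sg hsg sg' hsg' hc hne (f x) hx hx'
  -- Lebesgue number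
  obtain ⟨ℓ, hℓ, hLeb⟩ : ∃ ℓ > 0, ∀ x : F, ∃ sg ∈ SS, Metric.ball x ℓ ⊆ Ω sg := by
    have hcov : (univ : Set F) ⊆ ⋃ sg : {sg // sg ∈ SS}, Ω sg.1 := by
      intro x _
      obtain ⟨sg, hsg, hx⟩ := hΩcov x
      exact mem_iUnion.2 ⟨⟨sg, hsg⟩, hx⟩
    obtain ⟨ℓ, hℓ, hx⟩ := lebesgue_number_lemma_of_metric isCompact_univ
      (fun sg : {sg // sg ∈ SS} => hΩopen sg.1) hcov
    exact ⟨ℓ, hℓ, fun x => by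
      obtain ⟨sg, hsg⟩ := hx x (mem_univ x)
      exact ⟨sg.1, sg.2, hsg⟩⟩
  -- deep sets A sg
  set Aset : Finset (Set Z) → Set F := fun sg => {x | ∀ y : F, y ∉ Ω sg → ℓ ≤ dist x y}
    with hAdef
  have hAclosed : ∀ sg, IsClosed (Aset sg) := by
    intro sg
    have : Aset sg = ⋂ (y : F) (_ : y ∉ Ω sg), {x : F | ℓ ≤ dist x y} := by
      ext x; simp [hAdef, Set.mem_iInter]
    rw [this]
    exact isClosed_iInter fun y => isClosed_iInter fun _ =>
      isClosed_le continuous_const (continuous_id.dist continuous_const)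
  have hAsub : ∀ sg, Aset sg ⊆ Ω sg := by
    intro sg x hx
    by_contra hxn
    have := hx x hxn
    simp at this
    linarith
  have hAnear : ∀ sg, ∀ a ∈ Aset sg, ∀ x : F, dist x a < ℓ → x ∈ Ω sg := by
    intro sg a ha x hxa
    by_contra hxn
    have := ha x hxn
    rw [dist_comm] at this
    linarith
  have hAcov : ∀ x : F, ∃ sg ∈ SS, x ∈ Aset sg := by
    intro x
    obtain ⟨sg, hsg, hball⟩ := hLeb x
    refine ⟨sg, hsg, fun y hy => ?_⟩
    by_contra hlt
    push_neg at hlt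
    exact hy (hball (by rw [Metric.mem_ball, dist_comm]; exact hlt))
  have hAsep : ∀ sg ∈ SS, ∀ sg' ∈ SS, sg.card = sg'.card → sg ≠ sg' →
      ∀ a ∈ Aset sg, ∀ a' ∈ Aset sg', ℓ ≤ dist a a' := by
    intro sg hsg sg' hsg' hc hne a ha a' ha'
    have ha'Ω : a' ∈ Ω sg' := hAsub sg' ha'
    have ha'nΩ : a' ∉ Ω sg := fun hmem =>
      hΩdisj sg hsg sg' hsg' hc hne a' hmem ha'Ω
    exact ha a' ha'nΩ
  -- choose base points and preuniversal maps
  have hxsg : ∀ sg : Finset (Set Z), ∃ x : F, ((Aset sg).Nonempty → x ∈ Aset sg) := by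
    intro sg
    by_cases h : (Aset sg).Nonempty
    · exact ⟨h.choose, fun _ => h.choose_spec⟩
    · exact ⟨x₀, fun hh => absurd hh h⟩
  choose xsg hxsgspec using hxsg
  set w : Finset (Set Z) → M := fun sg => L (sg.card - 1) (xsg sg) with hwdef
  have hφ : ∀ sg : Finset (Set Z), ∃ φ : K → M, Continuous φ ∧ φ ⁻¹' X = C ∧
      ∀ y : K, dist (φ y) (w sg) < δ₁ := by
    intro sg
    obtain ⟨φ, h1, h2, h3⟩ := hpre (Metric.ball (w sg) δ₁) Metric.isOpen_ball
      ⟨w sg, Metric.mem_ball_self hδ₁⟩ K C hKC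
    exact ⟨φ, h1, h2, fun y => Metric.mem_ball.1 (h3 ⟨y, rfl⟩)⟩
  choose φm hφcont hφpre hφnear using hφ
  -- the cut-off functions
  set Θ : Finset (Set Z) → F → ℝ := fun sg x =>
    if (Aset sg).Nonempty then min 1 ((4/ℓ) * Metric.infDist x (Aset sg)) else 1 with hΘdef
  have hΘcont : ∀ sg, Continuous (Θ sg) := by
    intro sg
    by_cases h : (Aset sg).Nonempty
    · simp only [hΘdef, if_pos h]
      exact continuous_const.min (continuous_const.mul (Metric.continuous_infDist_pt _))
    · simp only [hΘdef, if_neg h]; exact continuous_const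
  have hΘ0 : ∀ sg, ∀ x ∈ Aset sg, Θ sg x = 0 := by
    intro sg x hx
    have hne : (Aset sg).Nonempty := ⟨x, hx⟩
    simp only [hΘdef, if_pos hne, Metric.infDist_zero_of_mem hx, mul_zero]
    simp
  have hΘ01 : ∀ sg x, 0 ≤ Θ sg x ∧ Θ sg x ≤ 1 := by
    intro sg x
    by_cases h : (Aset sg).Nonempty
    · simp only [hΘdef, if_pos h]
      constructor
      · exact le_min (by norm_num)
          (mul_nonneg (div_nonneg (by norm_num) (le_of_lt hℓ)) Metric.infDist_nonneg)
      · exact min_le_left _ _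
    · simp only [hΘdef, if_neg h]; norm_num
  have hΘfar : ∀ sg x, (∀ a ∈ Aset sg, ℓ/4 ≤ dist x a) → Θ sg x = 1 := by
    intro sg x hfar
    by_cases h : (Aset sg).Nonempty
    · simp only [hΘdef, if_pos h]
      have hid : ℓ/4 ≤ Metric.infDist x (Aset sg) := by
        by_contra hlt
        push_neg at hlt
        obtain ⟨a, ha, hda⟩ := (Metric.infDist_lt_iff h).1 hlt
        exact absurd hda (not_lt.2 (hfar a ha))
      have : (1:ℝ) ≤ (4/ℓ) * Metric.infDist x (Aset sg) := by
        rw [div_mul_eq_mul_div, le_div_iff₀ hℓ]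
        linarith
      exact min_eq_left this
    · simp only [hΘdef, if_neg h]
  have hΘlt1 : ∀ sg x, Θ sg x < 1 → (Aset sg).Nonempty ∧ ∃ a ∈ Aset sg, dist x a < ℓ/3 := by
    intro sg x hlt
    by_cases h : (Aset sg).Nonempty
    · refine ⟨h, ?_⟩
      simp only [hΘdef, if_pos h] at hlt
      have h2 : (4/ℓ) * Metric.infDist x (Aset sg) < 1 := by
        by_contra hge
        push_neg at hge
        rw [min_eq_left hge] at hlt
        exact lt_irrefl _ hlt
      have h2' : 4 * Metric.infDist x (Aset sg) / ℓ < 1 := by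
        rw [div_mul_eq_mul_div] at h2
        exact h2
      have h4 := (div_lt_one hℓ).1 h2'
      have h3 : Metric.infDist x (Aset sg) < ℓ/3 := by linarith
      exact (Metric.infDist_lt_iff h).1 h3
    · simp only [hΘdef, if_neg h] at hlt
      exact absurd hlt (lt_irrefl 1)
  have hΘuniq : ∀ sg ∈ SS, ∀ sg' ∈ SS, sg.card = sg'.card → sg' ≠ sg →
      ∀ x : F, Θ sg x < 1 → Θ sg' x = 1 := by
    intro sg hsg sg' hsg' hc hne x hlt
    obtain ⟨hAne, a, ha, hda⟩ := hΘlt1 sg x hlt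
    apply hΘfar
    intro a' ha'
    have hsep := hAsep sg hsg sg' hsg' hc (fun hh => hne hh.symm) a ha a' ha'
    have := dist_triangle a x a'
    rw [dist_comm a x] at this
    have h4 : dist x a' ≥ ℓ - ℓ/3 := by linarith [dist_triangle a x a']
    linarith
  have hΘmemΩ : ∀ sg, ∀ x : F, Θ sg x < 1 → x ∈ Ω sg := by
    intro sg x hlt
    obtain ⟨hAne, a, ha, hda⟩ := hΘlt1 sg x hlt
    exact hAnear sg a ha x (by linarith)
  -- per-color data
  set SSj : ℕ → Finset (Finset (Set Z)) := fun j => SS.filter (fun sg => sg.card = j+1)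
    with hSSjdef
  set Bj : ℕ → Set F := fun j => ⋃ sg ∈ SSj j, Aset sg with hBjdef
  have hBclosed : ∀ j, IsClosed (Bj j) := fun j =>
    isClosed_biUnion_finset (fun sg _ => hAclosed sg)
  -- oscillation control for w sg
  have hwnear : ∀ sg ∈ SS, ∀ x : F, Θ sg x < 1 →
      dist (L (sg.card - 1) x) (w sg) < δ₁ := by
    intro sg hsg x hlt
    have hAne : (Aset sg).Nonempty := (hΘlt1 sg x hlt).1
    have hxΩ : x ∈ Ω sg := hΘmemΩ sg x hlt
    have hxsgΩ : xsg sg ∈ Ω sg := hAsub sg (hxsgspec sg hAne)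
    obtain ⟨V, hVsg⟩ := (Finset.mem_filter.1 hsg).2.1
    have hVVF : V ∈ VF := (Finset.mem_powerset.1 (Finset.mem_filter.1 hsg).1) hVsg
    have hfx : f x ∈ V := hEsub sg hsg V hVsg hxΩ
    have hfxsg : f (xsg sg) ∈ V := hEsub sg hsg V hVsg hxsgΩ
    have hj : sg.card - 1 ≤ n := by
      have h1 : sg.card ≤ n+1 := (Finset.mem_filter.1 hsg).2.2
      omega
    exact hVFosc V hVVF (sg.card - 1) hj (f x) hfx (f (xsg sg)) hfxsg
  -- the sum maps Yval, hull membership, and the retracted maps Aj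
  set Yval : ℕ → F → (M →ᵇ ℝ) := fun j x =>
    e (L j x) + ∑ sg ∈ SSj j, (1 - Θ sg x) • (e (φm sg (x:K)) - e (L j x)) with hYdef
  have hYcont : ∀ j, Continuous (Yval j) := by
    intro j
    apply Continuous.add
    · exact hiso.continuous.comp (hLcont j)
    · apply continuous_finset_sum
      intro sg _
      exact (continuous_const.sub (hΘcont sg)).smul
        ((hiso.continuous.comp ((hφcont sg).comp continuous_subtype_val)).sub
          (hiso.continuous.comp (hLcont j)))
  have hsplit : ∀ j (x : F), (∀ sg ∈ SSj j, Θ sg x = 1) ∨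
      (∃ sg ∈ SSj j, Θ sg x < 1 ∧ ∀ sg' ∈ SSj j, sg' ≠ sg → Θ sg' x = 1) := by
    intro j x
    by_cases hall : ∀ sg ∈ SSj j, Θ sg x = 1
    · exact Or.inl hall
    · push_neg at hall
      obtain ⟨sg, hsg, hne1⟩ := hall
      have hsgSS : sg ∈ SS := (Finset.mem_filter.1 hsg).1
      have hcard : sg.card = j+1 := (Finset.mem_filter.1 hsg).2
      have hlt : Θ sg x < 1 := lt_of_le_of_ne (hΘ01 sg x).2 hne1
      refine Or.inr ⟨sg, hsg, hlt, fun sg' hsg' hne' => ?_⟩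
      have hsg'SS : sg' ∈ SS := (Finset.mem_filter.1 hsg').1
      have hcard' : sg'.card = j+1 := (Finset.mem_filter.1 hsg').2
      exact hΘuniq sg hsgSS sg' hsg'SS (by rw [hcard, hcard']) hne' x hlt
  have hcollapse1 : ∀ j (x : F), (∀ sg ∈ SSj j, Θ sg x = 1) → Yval j x = e (L j x) := by
    intro j x hall
    simp only [hYdef]
    rw [Finset.sum_eq_zero, add_zero]
    intro sg hsg
    rw [hall sg hsg]
    simp
  have hcollapse2 : ∀ j (x : F), ∀ sg ∈ SSj j, (∀ sg' ∈ SSj j, sg' ≠ sg → Θ sg' x = 1) →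
      Yval j x = (Θ sg x) • e (L j x) + (1 - Θ sg x) • e (φm sg (x:K)) := by
    intro j x sg hsg hothers
    simp only [hYdef]
    rw [Finset.sum_eq_single_of_mem sg hsg]
    · module
    · intro sg' hsg' hne
      rw [hothers sg' hsg' hne]
      simp
  have hYhull : ∀ j (x : F), Yval j x ∈ convexHull ℝ (Set.range e) := by
    intro j x
    rcases hsplit j x with hall | ⟨sg, hsg, hlt, hothers⟩
    · rw [hcollapse1 j x hall]
      exact subset_convexHull ℝ _ ⟨L j x, rfl⟩
    · rw [hcollapse2 j x sg hsg hothers]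
      have h1 := (hΘ01 sg x).1
      have h2 := (hΘ01 sg x).2
      exact (convex_convexHull ℝ (Set.range e))
        (subset_convexHull ℝ _ ⟨L j x, rfl⟩)
        (subset_convexHull ℝ _ ⟨φm sg (x:K), rfl⟩)
        h1 (by linarith) (by ring)
  have hYU : ∀ j (x : F),
      (⟨Yval j x, hYhull j x⟩ : ↥(convexHull ℝ (Set.range e))) ∈ U ∧
      dist (r ⟨Yval j x, hYhull j x⟩) (L j x) < δ₀ / 2 := by
    intro j x
    rcases hsplit j x with hall | ⟨sg, hsg, hlt, hothers⟩
    · have hval : Yval j x = e (L j x) := hcollapse1 j x hall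
      have hmm : e (L j x) ∈ convexHull ℝ (Set.range e) :=
        subset_convexHull ℝ _ ⟨L j x, rfl⟩
      have hsub : (⟨Yval j x, hYhull j x⟩ : ↥(convexHull ℝ (Set.range e)))
          = ⟨e (L j x), hmm⟩ := Subtype.ext hval
      rw [hsub]
      obtain ⟨hU, hr⟩ := hretr (L j x) hmm
      refine ⟨hU, ?_⟩
      rw [hr, dist_self]
      positivity
    · have hsgSS : sg ∈ SS := (Finset.mem_filter.1 hsg).1
      have hcard : sg.card = j+1 := (Finset.mem_filter.1 hsg).2
      have hjn : j ≤ n := by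
        have := (Finset.mem_filter.1 hsgSS).2.2
        omega
      have hwn : dist (L j x) (w sg) < δ₁ := by
        have := hwnear sg hsgSS x hlt
        rw [hcard] at this
        simpa using this
      have hφn : dist (φm sg (x:K)) (L j x) < 2 * δ₁ := by
        calc dist (φm sg (x:K)) (L j x)
            ≤ dist (φm sg (x:K)) (w sg) + dist (w sg) (L j x) := dist_triangle _ _ _
          _ < δ₁ + δ₁ := add_lt_add (hφnear sg (x:K)) (by rw [dist_comm]; exact hwn)
          _ = 2*δ₁ := by ring
      have hYdist : dist (Yval j x) (e (L j x)) < γf j := by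
        have hveq : Yval j x - e (L j x)
            = (1 - Θ sg x) • (e (φm sg (x:K)) - e (L j x)) := by
          rw [hcollapse2 j x sg hsg hothers]
          module
        have h1 : ‖e (φm sg (x:K)) - e (L j x)‖ = dist (φm sg (x:K)) (L j x) := by
          rw [← dist_eq_norm, hiso.dist_eq]
        have hb := norm_smul_le (1 - Θ sg x) (e (φm sg (x:K)) - e (L j x))
        rw [dist_eq_norm, hveq]
        have h2 : ‖(1 - Θ sg x)‖ ≤ 1 := by
          rw [Real.norm_eq_abs, abs_of_nonneg (by linarith [(hΘ01 sg x).2])]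
          linarith [(hΘ01 sg x).1]
        have h4 : γm ≤ γf j := hγmle j hjn
        have h6 : (2:ℝ)*δ₁ < γm := by rw [hδ₁def]; linarith [hγm]
        have h7 : ‖e (φm sg (x:K)) - e (L j x)‖ < γm := by rw [h1]; linarith [hφn]
        calc ‖(1 - Θ sg x) • (e (φm sg (x:K)) - e (L j x))‖
            ≤ ‖(1 - Θ sg x)‖ * ‖e (φm sg (x:K)) - e (L j x)‖ := hb
          _ ≤ 1 * ‖e (φm sg (x:K)) - e (L j x)‖ :=
              mul_le_mul_of_nonneg_right h2 (norm_nonneg _)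
          _ = ‖e (φm sg (x:K)) - e (L j x)‖ := one_mul _
          _ < γm := h7
          _ ≤ γf j := h4
      exact hγfspec j (L j x) ⟨x, rfl⟩ _ hYdist
  set Aj : ℕ → F → M := fun j x => r ⟨Yval j x, hYhull j x⟩ with hAjdef
  have hAjcont : ∀ j, Continuous (Aj j) := by
    intro j
    apply hrcont.comp_continuous
    · exact (hYcont j).subtype_mk _
    · exact fun x => (hYU j x).1
  have hAjdist : ∀ j (x : F), dist (Aj j x) (L j x) < δ₀ / 2 := fun j x => (hYU j x).2
  have hAjA : ∀ sg ∈ SS, ∀ x ∈ Aset sg, Aj (sg.card - 1) x = φm sg (x:K) := by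
    intro sg hsg x hx
    have hsgne : sg.Nonempty := (Finset.mem_filter.1 hsg).2.1
    have hc1 : 1 ≤ sg.card := Finset.card_pos.2 hsgne
    have hsgj : sg ∈ SSj (sg.card - 1) := Finset.mem_filter.2 ⟨hsg, by omega⟩
    have hΘ0' : Θ sg x = 0 := hΘ0 sg x hx
    have hothers : ∀ sg' ∈ SSj (sg.card - 1), sg' ≠ sg → Θ sg' x = 1 := by
      intro sg' hsg' hne
      have hsg'SS := (Finset.mem_filter.1 hsg').1
      have hcard' : sg'.card = (sg.card - 1)+1 := (Finset.mem_filter.1 hsg').2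
      exact hΘuniq sg hsg sg' hsg'SS (by omega) hne x (by rw [hΘ0']; norm_num)
    have hval : Yval (sg.card - 1) x = e (φm sg (x:K)) := by
      rw [hcollapse2 (sg.card - 1) x sg hsgj hothers, hΘ0']
      simp
    have hmm : e (φm sg (x:K)) ∈ convexHull ℝ (Set.range e) :=
      subset_convexHull ℝ _ ⟨_, rfl⟩
    have hsub : (⟨Yval (sg.card - 1) x, hYhull (sg.card - 1) x⟩
        : ↥(convexHull ℝ (Set.range e))) = ⟨e (φm sg (x:K)), hmm⟩ := Subtype.ext hval
    show r ⟨Yval (sg.card - 1) x, hYhull (sg.card - 1) x⟩ = φm sg (x:K)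
    rw [hsub]
    exact (hretr _ hmm).2
  -- time scales
  have htH : ∀ j : ℕ, ∃ tj : ℝ, 0 < tj ∧ tj ≤ 1 ∧
      ∀ (x : F) (s : I), (s:ℝ) ≤ tj → dist (Ho (Aj j x, s)) (Aj j x) < δ₀ / 2 := by
    intro j
    have hS : IsCompact ((Set.range (Aj j)) ×ˢ ({(0:I)} : Set I)) :=
      (isCompact_range (hAjcont j)).prod isCompact_singleton
    obtain ⟨η, hη, hspec⟩ := unifNear hHcont hS (by positivity : (0:ℝ) < δ₀/2)
    refine ⟨min 1 (η/2), by positivity, min_le_left _ _, ?_⟩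
    intro x s hs
    have hp : (Aj j x, (0:I)) ∈ (Set.range (Aj j)) ×ˢ ({(0:I)} : Set I) :=
      ⟨⟨x, rfl⟩, rfl⟩
    have hd : dist ((Aj j x, s) : M × I) (Aj j x, (0:I)) < η := by
      rw [Prod.dist_eq]
      apply max_lt
      · simpa using hη
      · have hds : dist s (0:I) = (s:ℝ) := by
          rw [Subtype.dist_eq]
          simp [Real.dist_eq, abs_of_nonneg s.2.1]
        rw [hds]
        calc (s:ℝ) ≤ min 1 (η/2) := hs
          _ ≤ η/2 := min_le_right _ _
          _ < η := by linarith
    have hres := hspec _ hp _ hd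
    rw [hH0 (Aj j x)] at hres
    exact hres
  choose tH htH1 htH2 htH3 using htH
  obtain ⟨tρ, htρ1, htρ2, htρ3⟩ : ∃ tρ : ℝ, 0 < tρ ∧ tρ ≤ 1 ∧
      ∀ (x : F) (s : I), (s:ℝ) ≤ tρ → dist (Ho (R x, s)) (R x) < δ₀ := by
    have hS : IsCompact ((Set.range R) ×ˢ ({(0:I)} : Set I)) :=
      (isCompact_range hRcont).prod isCompact_singleton
    obtain ⟨η, hη, hspec⟩ := unifNear hHcont hS hδ₀
    refine ⟨min 1 (η/2), by positivity, min_le_left _ _, ?_⟩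
    intro x s hs
    have hp : (R x, (0:I)) ∈ (Set.range R) ×ˢ ({(0:I)} : Set I) := ⟨⟨x, rfl⟩, rfl⟩
    have hd : dist ((R x, s) : M × I) (R x, (0:I)) < η := by
      rw [Prod.dist_eq]
      apply max_lt
      · simpa using hη
      · have hds : dist s (0:I) = (s:ℝ) := by
          rw [Subtype.dist_eq]
          simp [Real.dist_eq, abs_of_nonneg s.2.1]
        rw [hds]
        calc (s:ℝ) ≤ min 1 (η/2) := hs
          _ ≤ η/2 := min_le_right _ _
          _ < η := by linarith
    have hres := hspec _ hp _ hd
    rw [hH0 (R x)] at hres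
    exact hres
  -- time functions
  set sj : ℕ → F → ℝ := fun j x =>
    if (Bj j) = ∅ then tH j else min (tH j) (Metric.infDist x (Bj j)) with hsjdef
  have hsjcont : ∀ j, Continuous (sj j) := by
    intro j
    by_cases h : (Bj j) = ∅
    · simp only [hsjdef, if_pos h]; exact continuous_const
    · simp only [hsjdef, if_neg h]
      exact continuous_const.min (Metric.continuous_infDist_pt _)
  have hsj01 : ∀ j x, 0 ≤ sj j x ∧ sj j x ≤ 1 := by
    intro j x
    by_cases h : (Bj j) = ∅
    · simp only [hsjdef, if_pos h]
      exact ⟨le_of_lt (htH1 j), htH2 j⟩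
    · simp only [hsjdef, if_neg h]
      constructor
      · exact le_min (le_of_lt (htH1 j)) Metric.infDist_nonneg
      · exact (min_le_left _ _).trans (htH2 j)
  have hsjle : ∀ j x, sj j x ≤ tH j := by
    intro j x
    by_cases h : (Bj j) = ∅
    · simp only [hsjdef, if_pos h]; exact le_rfl
    · simp only [hsjdef, if_neg h]; exact min_le_left _ _
  have hsj0 : ∀ j x, (sj j x = 0 ↔ x ∈ Bj j) := by
    intro j x
    by_cases h : (Bj j) = ∅
    · simp only [hsjdef, if_pos h]
      constructor
      · intro h0; exact absurd h0 (ne_of_gt (htH1 j))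
      · intro hx; rw [h] at hx; exact absurd hx (notMem_empty x)
    · simp only [hsjdef, if_neg h]
      have hne : (Bj j).Nonempty := nonempty_iff_ne_empty.2 h
      constructor
      · intro h0
        have : Metric.infDist x (Bj j) = 0 := by
          rcases min_eq_iff.1 h0 with ⟨h1, _⟩ | ⟨h1, _⟩
          · exact absurd h1 (ne_of_gt (htH1 j))
          · exact h1
        exact ((hBclosed j).mem_iff_infDist_zero hne).2 this
      · intro hx
        rw [Metric.infDist_zero_of_mem hx]
        simp [le_of_lt (htH1 j)]
  set sI : ℕ → F → I := fun j x => ⟨sj j x, (hsj01 j x).1, (hsj01 j x).2⟩ with hsIdef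
  set lam : ℕ → F → M := fun j x => Ho (Aj j x, sI j x) with hlamdef
  have hlamcont : ∀ j, Continuous (lam j) := by
    intro j
    apply hHcont.comp
    apply (hAjcont j).prodMk
    exact Continuous.subtype_mk (hsjcont j) _
  have hlamdist : ∀ j (x : F), dist (lam j x) (L j x) < δ₀ := by
    intro j x
    calc dist (lam j x) (L j x) ≤ dist (lam j x) (Aj j x) + dist (Aj j x) (L j x) :=
          dist_triangle _ _ _
      _ < δ₀ / 2 + δ₀ / 2 := add_lt_add (htH3 j x (sI j x) (hsjle j x)) (hAjdist j x)
      _ = δ₀ := by ring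
  have hlamX : ∀ j (x : F),
      (x ∈ Bj j → (lam j x ∈ X ↔ (x:K) ∈ C)) ∧ (x ∉ Bj j → lam j x ∈ X) := by
    intro j x
    constructor
    · intro hxB
      have hs0 : sj j x = 0 := (hsj0 j x).2 hxB
      have hlamval : lam j x = Aj j x := by
        have hI0 : sI j x = (0:I) := Subtype.ext hs0
        show Ho (Aj j x, sI j x) = Aj j x
        rw [hI0, hH0]
      obtain ⟨sg, hsgj, hxA⟩ : ∃ sg ∈ SSj j, x ∈ Aset sg := by
        rcases mem_iUnion₂.1 hxB with ⟨sg, hsg, hx⟩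
        exact ⟨sg, hsg, hx⟩
      have hsgSS := (Finset.mem_filter.1 hsgj).1
      have hcard : sg.card = j+1 := (Finset.mem_filter.1 hsgj).2
      have hAjval : Aj j x = φm sg (x:K) := by
        have := hAjA sg hsgSS x hxA
        rw [hcard] at this
        simpa using this
      rw [hlamval, hAjval]
      have hiff : (x:K) ∈ φm sg ⁻¹' X ↔ (x:K) ∈ C := by rw [hφpre sg]
      exact hiff
    · intro hxB
      have hs0 : sj j x ≠ 0 := fun h0 => hxB ((hsj0 j x).1 h0)
      apply hHX
      intro hcon
      exact hs0 (congrArg Subtype.val hcon)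
  -- final map
  set ρf : F → M := fun x => Ho (R x, ⟨tρ, le_of_lt htρ1, htρ2⟩) with hρdef
  have hρcont : Continuous ρf := hHcont.comp (hRcont.prodMk continuous_const)
  have hρdist : ∀ x : F, dist (ρf x) (R x) < δ₀ := fun x => htρ3 x _ le_rfl
  have hρX : ∀ x : F, ρf x ∈ X := fun x => hHX _ _ (by
    intro hcon
    have := congrArg Subtype.val hcon
    simp at this
    exact absurd this (ne_of_gt htρ1))
  refine ⟨fun x => Wk mul (n+1) (fun i : Fin (n+1) => lam (i:ℕ) x) (ρf x), ?_, ?_, ?_⟩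
  · have hc1 : Continuous (fun x : F => ((fun i : Fin (n+1) => lam (i:ℕ) x), ρf x)) :=
      (continuous_pi (fun i : Fin (n+1) => hlamcont (i:ℕ))).prodMk hρcont
    exact (contWk mul hmul (n+1)).comp hc1
  · intro x
    have hp : ((fun i : Fin (n+1) => L (i:ℕ) x), R x) ∈
        Set.range (fun x : F => ((fun i : Fin (n+1) => L (i:ℕ) x), R x)) := ⟨x, rfl⟩
    have hdlt : dist ((fun i : Fin (n+1) => lam (i:ℕ) x), ρf x)
        ((fun i : Fin (n+1) => L (i:ℕ) x), R x) < δ₀ := by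
      rw [Prod.dist_eq]
      apply max_lt
      · exact (dist_pi_lt_iff hδ₀).2 (fun i => hlamdist (i:ℕ) x)
      · exact hρdist x
    have := hδ₀spec _ hp _ hdlt
    simpa [hWG x] using this
  · intro x
    rw [Wk_mem mul X hXmul]
    constructor
    · rintro ⟨hall, -⟩
      obtain ⟨sg, hsg, hx⟩ := hAcov x
      have hsgne : sg.Nonempty := (Finset.mem_filter.1 hsg).2.1
      have hcardle : sg.card ≤ n+1 := (Finset.mem_filter.1 hsg).2.2
      have hcardpos : 1 ≤ sg.card := Finset.card_pos.2 hsgne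
      set j := sg.card - 1 with hjdef
      have hjn : j < n + 1 := by omega
      have hsgj : sg ∈ SSj j := by
        rw [hSSjdef, Finset.mem_filter]
        exact ⟨hsg, by omega⟩
      have hxB : x ∈ Bj j := by
        rw [hBjdef]
        exact mem_biUnion hsgj hx
      have := ((hlamX j x).1 hxB).1 (by
        have := hall ⟨j, hjn⟩
        simpa using this)
      exact this
    · intro hxC
      refine ⟨fun i => ?_, hρX x⟩
      by_cases hxB : x ∈ Bj (i:ℕ)
      · exact ((hlamX (i:ℕ) x).1 hxB).2 hxC
      · exact (hlamX (i:ℕ) x).2 hxB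
end

section
/- Let Z be a locally compact separable metrizable space, A a topological space, g:A→Z a proper continuous map, and ε:A→(0,1] a continuous function. Then there exists a continuous function δ:Z→(0,1] such that δ(g(x))≤ε(x) for every x∈A. -/
open Set Topology

/-- A map is proper if preimages of compact sets are compact. -/
def ProperMap {X Y : Type*} [TopologicalSpace X] [TopologicalSpace Y] (f : X → Y) : Prop :=
  ∀ K : Set Y, IsCompact K → IsCompact (f ⁻¹' K)

/-- Let `Z` be a locally compact separable metrizable space, `A` a topological space,
`g : A → Z` a proper continuous map and `ε : A → (0,1]` continuous.  Then there is a
continuous `δ : Z → (0,1]` with `δ(g(x)) ≤ ε(x)` for all `x ∈ A`. -/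
theorem statement14 {Z : Type*} [TopologicalSpace Z] [LocallyCompactSpace Z]
    [TopologicalSpace.MetrizableSpace Z] [TopologicalSpace.SeparableSpace Z]
    {A : Type*} [TopologicalSpace A]
    (g : A → Z) (hgc : Continuous g) (hgp : ProperMap g)
    (ε : A → ℝ) (hεc : Continuous ε) (hε : ∀ x, ε x ∈ Set.Ioc (0 : ℝ) 1) :
    ∃ δ : Z → ℝ, Continuous δ ∧ (∀ z, δ z ∈ Set.Ioc (0 : ℝ) 1) ∧
      ∀ x : A, δ (g x) ≤ ε x := by
  letI : MetricSpace Z := TopologicalSpace.metrizableSpaceMetric Z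
  set t : Z → Set ℝ := fun z => Ioc (0 : ℝ) 1 ∩ ⋂ x ∈ g ⁻¹' {z}, Iic (ε x) with ht_def
  have ht : ∀ z, Convex ℝ (t z) := fun z =>
    ((convex_Ioc 0 1).inter (convex_iInter fun x => convex_iInter fun _ => convex_Iic _))
  have H : ∀ z : Z, ∃ c : ℝ, ∀ᶠ y in 𝓝 z, c ∈ t y := by
    intro z
    obtain ⟨K, hKcomp, hKnhds⟩ := exists_compact_mem_nhds z
    have hpre : IsCompact (g ⁻¹' K) := hgp K hKcomp
    rcases (g ⁻¹' K).eq_empty_or_nonempty with hemp | hne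
    · refine ⟨1, Filter.eventually_of_mem hKnhds fun y hy => ?_⟩
      refine ⟨⟨zero_lt_one, le_refl 1⟩, ?_⟩
      simp only [mem_iInter, mem_Iic]
      intro x hx
      have : x ∈ g ⁻¹' K := by rw [Set.mem_preimage, hx]; exact hy
      rw [hemp] at this
      exact absurd this (Set.notMem_empty x)
    · obtain ⟨x₀, hx₀, hmin⟩ := hpre.exists_isMinOn hne (hεc.continuousOn)
      refine ⟨ε x₀, Filter.eventually_of_mem hKnhds fun y hy => ?_⟩
      refine ⟨⟨(hε x₀).1, (hε x₀).2⟩, ?_⟩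
      simp only [mem_iInter, mem_Iic]
      intro x hx
      exact hmin (show x ∈ g ⁻¹' K by rw [Set.mem_preimage, hx]; exact hy)
  obtain ⟨δ, hδ⟩ := exists_continuous_forall_mem_convex_of_local_const ht H
  refine ⟨δ, δ.continuous, fun z => (hδ z).1, fun x => ?_⟩
  have := (hδ (g x)).2
  simp only [mem_iInter, mem_Iic] at this
  exact this x rfl
end
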